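/- Let H be any function with H : 𝒯 → ℝ and H ∈ L¹_loc(dG). Define F(t) = Ḡ(t)⁻¹·[F(0)Ḡ(0) − ∫_{(0,t]} H(s) dG(s)] for 0 < t < t_G, where F(0) is an arbitrary real number in Case A, while in Case B F(0) = Ḡ(0)⁻¹·∫_{(0,t_G]} H(s) dG(s). Then the pair (F, H) satisfies Condition M. Conversely, if F is any function such that the pair (F, H) satisfies Condition M, then F(t) = Ḡ(t)⁻¹·[F(0)Ḡ(0) − ∫_{(0,t]} H(s) dG(s)] for all 0 < t < t_G and, in Case B, F(0) = Ḡ(0)⁻¹·∫_{(0,t_G]} H(s) dG(s). -/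

import Mathlib

open MeasureTheory Filter Set Topology
open scoped ENNReal NNReal Classical

noncomputable section

namespace SingleJump

variable {Ω : Type*}

/-- The event `{γ > t}`. -/
def jumpSet (γ : Ω → ℝ≥0∞) (t : ℝ≥0) : Set Ω := {ω | (t : ℝ≥0∞) < γ ω}

/-- The collection `𝒻_t` of the single jump filtration generated by `γ` and the σ-field `m`:
`A ∈ 𝒻_t` iff `A` is `m`-measurable and `A ∩ {γ > t}` is either `∅` or `{γ > t}`. -/
def jumpColl (m : MeasurableSpace Ω) (γ : Ω → ℝ≥0∞) (t : ℝ≥0) : Set (Set Ω) :=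
  {A | MeasurableSet[m] A ∧ (A ∩ jumpSet γ t = ∅ ∨ A ∩ jumpSet γ t = jumpSet γ t)}

/-- `𝒻_t` as a σ-field (the collection `jumpColl` generates itself, see Proposition 1(i)). -/
def jumpσ (m : MeasurableSpace Ω) (γ : Ω → ℝ≥0∞) (t : ℝ≥0) : MeasurableSpace Ω :=
  MeasurableSpace.generateFrom (jumpColl m γ t)

/-- `𝒻_∞ = σ(⋃_{t ∈ ℝ₊} 𝒻_t)`. -/
def jumpσInf (m : MeasurableSpace Ω) (γ : Ω → ℝ≥0∞) : MeasurableSpace Ω :=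
  ⨆ t : ℝ≥0, jumpσ m γ t

/-- A real function on `ℝ≥0` is càdlàg: right-continuous everywhere, finite left limits. -/
def Cadlag (f : ℝ≥0 → ℝ) : Prop :=
  (∀ t, ContinuousWithinAt f (Ici t) t) ∧
    ∀ t : ℝ≥0, 0 < t → ∃ c : ℝ, Tendsto f (𝓝[<] t) (𝓝 c)

/-- The filter of times `t ∈ ℝ≥0` with `t ↑ a` strictly from the left (this is `atTop`
when `a = ∞`). -/
def leftF (a : ℝ≥0∞) : Filter ℝ≥0 := Filter.comap (fun t : ℝ≥0 => (t : ℝ≥0∞)) (𝓝[<] a)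

/-- Total variation of `f` over `[0,∞)`, including `|f 0|` (the paper's convention `Var`). -/
def totalVar (f : ℝ≥0 → ℝ) : ℝ≥0∞ := (‖f 0‖₊ : ℝ≥0∞) + eVariationOn f Set.univ

/-- The process `M` stopped at the (possibly infinite) random time `T`. -/
def stopped (M : ℝ≥0 → Ω → ℝ) (T : Ω → ℝ≥0∞) : ℝ≥0 → Ω → ℝ :=
  fun t ω => M (((t : ℝ≥0∞) ⊓ T ω).toNNReal) ω

section WithMeasurableSpace

variable [m : MeasurableSpace Ω]

/-- `Ḡ(t) = 1 - G(t) = P(γ > t)`. -/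
def Gbar (μ : Measure Ω) (γ : Ω → ℝ≥0∞) (t : ℝ≥0) : ℝ :=
  (μ {ω | (t : ℝ≥0∞) < γ ω}).toReal

/-- `Ḡ(t-) = P(γ ≥ t)`, the left-hand limit of `Ḡ` at `t`. -/
def GbarLeft (μ : Measure Ω) (γ : Ω → ℝ≥0∞) (t : ℝ≥0) : ℝ :=
  (μ {ω | (t : ℝ≥0∞) ≤ γ ω}).toReal

/-- `t_G = sup {t ∈ ℝ₊ : G(t) < 1}`, the right endpoint of the law of `γ`. -/
def tG (μ : Measure Ω) (γ : Ω → ℝ≥0∞) : ℝ≥0∞ :=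
  sSup ((fun t : ℝ≥0 => (t : ℝ≥0∞)) '' {t : ℝ≥0 | μ {ω | γ ω ≤ (t : ℝ≥0∞)} < 1})

/-- `𝒯 = {t ∈ ℝ₊ : P(γ ≥ t) > 0}`. -/
def TT (μ : Measure Ω) (γ : Ω → ℝ≥0∞) : Set ℝ≥0 :=
  {t | 0 < μ {ω | (t : ℝ≥0∞) ≤ γ ω}}

/-- Case A: `P(γ = t_G < ∞) = 0`. -/
def CaseA (μ : Measure Ω) (γ : Ω → ℝ≥0∞) : Prop :=
  μ {ω | γ ω = tG μ γ ∧ tG μ γ < ⊤} = 0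

/-- Case B: `P(γ = t_G < ∞) > 0`. -/
def CaseB (μ : Measure Ω) (γ : Ω → ℝ≥0∞) : Prop :=
  0 < μ {ω | γ ω = tG μ γ ∧ tG μ γ < ⊤}

/-- `z ∈ L¹_loc(dG)` : `z` is Borel and `∫_{[0,t]} |z(s)| dG(s) < ∞` for every `t ∈ 𝒯`,
where `dG` is the law of `γ` (a measure on `[0,∞]`). -/
def MemL1loc (μ : Measure Ω) (γ : Ω → ℝ≥0∞) (z : ℝ≥0 → ℝ) : Prop :=
  Measurable z ∧ ∀ t ∈ TT μ γ,
    IntegrableOn (fun x : ℝ≥0∞ => z x.toNNReal) (Icc 0 (t : ℝ≥0∞)) (μ.map γ)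

/-- `F loc≪ G` with density `z = dF/dG` : `F(t) = F(0) + ∫_(0,t] z(s) dG(s)` for `t < t_G`. -/
def LocAC (μ : Measure Ω) (γ : Ω → ℝ≥0∞) (F z : ℝ≥0 → ℝ) : Prop :=
  MemL1loc μ γ z ∧ ∀ t : ℝ≥0, (t : ℝ≥0∞) < tG μ γ →
    F t = F 0 + ∫ x in Ioc (0 : ℝ≥0∞) (t : ℝ≥0∞), z x.toNNReal ∂(μ.map γ)

/-- Condition M for the pair `(F, H)`. -/
def CondM (μ : Measure Ω) (γ : Ω → ℝ≥0∞) (F H : ℝ≥0 → ℝ) : Prop :=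
  (∃ z, LocAC μ γ F z) ∧ MemL1loc μ γ H ∧
  (∀ t : ℝ≥0, (t : ℝ≥0∞) < tG μ γ →
    F t * Gbar μ γ t + ∫ x in Ioc (0 : ℝ≥0∞) (t : ℝ≥0∞), H x.toNNReal ∂(μ.map γ)
      = F 0 * Gbar μ γ 0) ∧
  (CaseB μ γ → Tendsto F (leftF (tG μ γ)) (𝓝 (H (tG μ γ).toNNReal)))

/-- A stopping time of the single jump filtration: `{T ≤ t} ∈ 𝒻_t` for all `t ∈ ℝ₊`. -/
def IsSJStoppingTime (γ : Ω → ℝ≥0∞) (T : Ω → ℝ≥0∞) : Prop :=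
  ∀ t : ℝ≥0, {ω | T ω ≤ (t : ℝ≥0∞)} ∈ jumpColl m γ t

/-- The martingale property on a set `S` of times, w.r.t. the single jump filtration. -/
def MartingaleOn (μ : Measure Ω) (γ : Ω → ℝ≥0∞) (M : ℝ≥0 → Ω → ℝ) (S : Set ℝ≥0) : Prop :=
  (∀ t ∈ S, Measurable[jumpσ m γ t] (M t)) ∧ (∀ t ∈ S, Integrable (M t) μ) ∧
    ∀ s ∈ S, ∀ t ∈ S, s ≤ t → μ[M t|jumpσ m γ s] =ᵐ[μ] M s

/-- A uniformly integrable martingale w.r.t. the single jump filtration. -/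
def UIMartingale (μ : Measure Ω) (γ : Ω → ℝ≥0∞) (M : ℝ≥0 → Ω → ℝ) : Prop :=
  MartingaleOn μ γ M Set.univ ∧ UniformIntegrable M 1 μ

/-- A local martingale w.r.t. the single jump filtration: adapted, a.s. càdlàg paths, and
there are stopping times `T n ↑ ∞` a.s. with each stopped process a UI martingale. -/
def LocalMartingale (μ : Measure Ω) (γ : Ω → ℝ≥0∞) (M : ℝ≥0 → Ω → ℝ) : Prop :=
  (∀ t : ℝ≥0, Measurable[jumpσ m γ t] (M t)) ∧
  (∀ᵐ ω ∂μ, Cadlag fun t => M t ω) ∧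
  ∃ T : ℕ → Ω → ℝ≥0∞,
    (∀ n, IsSJStoppingTime γ (T n)) ∧
    (∀ᵐ ω ∂μ, Monotone (fun n => T n ω) ∧ Tendsto (fun n => T n ω) atTop (𝓝 (⊤ : ℝ≥0∞))) ∧
    ∀ n, UIMartingale μ γ (stopped M (T n))

/-- `E[L' | γ] = 0` for a (possibly only locally integrable) random variable `L'`. -/
def CondZeroGivenGamma (μ : Measure Ω) (γ : Ω → ℝ≥0∞) (L' : Ω → ℝ) : Prop :=
  ∀ B : Set ℝ≥0∞, MeasurableSet B → IntegrableOn L' (γ ⁻¹' B) μ →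
    ∫ ω in γ ⁻¹' B, L' ω ∂μ = 0



/-! ### Auxiliary general lemmas -/

section AuxGeneral

/-- Right-continuity of `y ↦ (ρ (Iic y)).toReal` for a finite measure. -/
private lemma rc_Iic_aux {α : Type*} [MeasurableSpace α] [TopologicalSpace α] [LinearOrder α]
    [OrderTopology α] [DenselyOrdered α] [FirstCountableTopology α] [OpensMeasurableSpace α]
    (ρ : Measure α) [IsFiniteMeasure ρ] (b : α) (hb : ∃ c, b < c) :
    ContinuousWithinAt (fun y => (ρ (Iic y)).toReal) (Ici b) b := by
  rw [← continuousWithinAt_Ioi_iff_Ici]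
  have h1 := tendsto_measure_biInter_gt (μ := ρ) (s := fun r => Iic r) (a := b)
      (fun r _ => measurableSet_Iic.nullMeasurableSet) (fun i j _ hij => Iic_subset_Iic.mpr hij)
      (hb.imp fun c hc => ⟨hc, measure_ne_top ρ _⟩)
  have h2 : (⋂ r > b, Iic r) = Iic b := by
    apply Subset.antisymm
    · intro x hx
      simp only [mem_iInter₂] at hx
      rw [mem_Iic]
      by_contra hxb
      push_neg at hxb
      obtain ⟨z, hz1, hz2⟩ := exists_between hxb
      exact absurd (hx z hz1) (not_le.mpr hz2)
    · intro x hx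
      rw [mem_Iic] at hx
      exact mem_iInter₂.mpr fun r hr => mem_Iic.mpr (le_trans hx hr.le)
  rw [h2] at h1
  exact (ENNReal.tendsto_toReal (measure_ne_top ρ _)).comp h1

/-- A Stieltjes function which is eventually constant on both sides has a finite measure. -/
private lemma sf_measure_finite (f : StieltjesFunction ℝ) (a b : ℝ)
    (h1 : ∀ x, x ≤ a → f x = f a) (h2 : ∀ x, b ≤ x → f x = f b) :
    IsFiniteMeasure f.measure := by
  refine ⟨?_⟩
  have hl : Tendsto f atBot (𝓝 (f a)) :=
    tendsto_const_nhds.congr' (((eventually_le_atBot a).mono fun x hx => (h1 x hx).symm))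
  have hu : Tendsto f atTop (𝓝 (f b)) :=
    tendsto_const_nhds.congr' (((eventually_ge_atTop b).mono fun x hx => (h2 x hx).symm))
  rw [f.measure_univ hl hu]
  exact ENNReal.ofReal_lt_top

/-- Domination of one finite measure on `ℝ` by another via `Ioc` intervals. -/
private lemma measure_le_of_Ioc_le (α β : Measure ℝ) [IsFiniteMeasure α] [IsFiniteMeasure β]
    (h : ∀ a b : ℝ, a < b → α (Ioc a b) ≤ β (Ioc a b)) : α ≤ β := by
  have hIic : ∀ (ρ : Measure ℝ) (x y : ℝ), x ≤ y → ρ (Iic x) + ρ (Ioc x y) = ρ (Iic y) := by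
    intro ρ x y hxy
    rw [← measure_union (Iic_disjoint_Ioc le_rfl) measurableSet_Ioc, Iic_union_Ioc_eq_Iic hxy]
  have hdiff : ∀ (x y : ℝ), x ≤ y → ∀ ρ : Measure ℝ, IsFiniteMeasure ρ →
      (ρ (Iic y)).toReal - (ρ (Iic x)).toReal = (ρ (Ioc x y)).toReal := by
    intro x y hxy ρ hρ
    rw [← hIic ρ x y hxy, ENNReal.toReal_add (measure_ne_top _ _) (measure_ne_top _ _)]
    ring
  set d : ℝ → ℝ := fun x => (β (Iic x)).toReal - (α (Iic x)).toReal with hd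
  have hmono : Monotone d := by
    intro x y hxy
    have h1 := hdiff x y hxy β inferInstance
    have h2 := hdiff x y hxy α inferInstance
    have h3 : (α (Ioc x y)).toReal ≤ (β (Ioc x y)).toReal := by
      rcases eq_or_lt_of_le hxy with rfl | hlt
      · simp [Ioc_self]
      · exact ENNReal.toReal_mono (measure_ne_top _ _) (h x y hlt)
    show (β (Iic x)).toReal - (α (Iic x)).toReal ≤ (β (Iic y)).toReal - (α (Iic y)).toReal
    nlinarith [h1, h2, h3]
  have hrc : ∀ x, ContinuousWithinAt d (Ici x) x := fun x =>
    ((rc_Iic_aux β x ⟨x + 1, by linarith⟩).sub (rc_Iic_aux α x ⟨x + 1, by linarith⟩))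
  set D : StieltjesFunction ℝ := ⟨d, hmono, hrc⟩ with hD
  have key : α + D.measure = β := by
    refine Measure.ext_of_Ioc' (α + D.measure) β (fun a b hab => ?_) (fun a b hab => ?_)
    · rw [Measure.add_apply]
      exact ENNReal.add_ne_top.mpr ⟨measure_ne_top _ _,
        by rw [D.measure_Ioc]; exact ENNReal.ofReal_ne_top⟩
    · rw [Measure.add_apply, D.measure_Ioc]
      have h1 : D b - D a = (β (Ioc a b)).toReal - (α (Ioc a b)).toReal := by
        show d b - d a = _
        have hb' := hdiff a b hab.le β inferInstance
        have ha' := hdiff a b hab.le α inferInstance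
        simp only [hd]
        nlinarith [hb', ha']
      rw [h1, ENNReal.ofReal_sub _ ENNReal.toReal_nonneg,
        ENNReal.ofReal_toReal (measure_ne_top β _), ENNReal.ofReal_toReal (measure_ne_top α _),
        add_comm, tsub_add_cancel_of_le (h a b hab)]
  rw [← key]
  exact Measure.le_add_right (le_refl α)

end AuxGeneral

section BasicG
set_option linter.unusedSectionVars false

variable (μ : Measure Ω) [IsProbabilityMeasure μ] (γ : Ω → ℝ≥0∞)

lemma gbar_eq (hγ : Measurable γ) (t : ℝ≥0) :
    Gbar μ γ t = ((μ.map γ) (Ioi (t : ℝ≥0∞))).toReal := by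
  rw [Gbar, Measure.map_apply hγ measurableSet_Ioi]
  rfl

lemma Ioi_coe_iUnion (t : ℝ≥0) :
    Ioi (t : ℝ≥0∞) = ⋃ n : ℕ, Ioi (((t + ((n : ℝ≥0) + 1)⁻¹ : ℝ≥0)) : ℝ≥0∞) := by
  apply Subset.antisymm
  · intro x hx
    rw [mem_Ioi] at hx
    rcases eq_or_ne x ∞ with rfl | hfin
    · exact mem_iUnion.mpr ⟨0, ENNReal.coe_lt_top⟩
    · lift x to ℝ≥0 using hfin
      rw [ENNReal.coe_lt_coe] at hx
      obtain ⟨n, hn⟩ := exists_nat_one_div_lt (tsub_pos_of_lt hx)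
      refine mem_iUnion.mpr ⟨n, ?_⟩
      rw [mem_Ioi, ENNReal.coe_lt_coe]
      have h1 : t + ((n : ℝ≥0) + 1)⁻¹ < t + (x - t) := by
        apply add_lt_add_right
        simpa [one_div] using hn
      rwa [add_tsub_cancel_of_le hx.le] at h1
  · exact iUnion_subset fun n => Ioi_subset_Ioi (ENNReal.coe_le_coe.mpr le_self_add)

lemma iic_map_eq (hγ : Measurable γ) (s : ℝ≥0) :
    μ {ω | γ ω ≤ (s : ℝ≥0∞)} = (μ.map γ) (Iic (s : ℝ≥0∞)) := by
  rw [Measure.map_apply hγ measurableSet_Iic]; rfl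

lemma iic_add_ioi (hγ : Measurable γ) (s : ℝ≥0∞) :
    (μ.map γ) (Iic s) + (μ.map γ) (Ioi s) = 1 := by
  haveI : IsProbabilityMeasure (μ.map γ) := Measure.isProbabilityMeasure_map hγ.aemeasurable
  rw [← measure_union (Iic_disjoint_Ioi le_rfl) measurableSet_Ioi, Iic_union_Ioi]
  exact measure_univ

lemma lt_tG_iff (hγ : Measurable γ) (t : ℝ≥0) :
    (t : ℝ≥0∞) < tG μ γ ↔ 0 < (μ.map γ) (Ioi (t : ℝ≥0∞)) := by
  haveI : IsProbabilityMeasure (μ.map γ) := Measure.isProbabilityMeasure_map hγ.aemeasurable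
  constructor
  · intro h
    obtain ⟨b, hb, htb⟩ := lt_sSup_iff.mp h
    obtain ⟨s, hs, rfl⟩ := hb
    rw [mem_setOf_eq, iic_map_eq μ γ hγ] at hs
    by_contra h0
    push_neg at h0
    have h0' : (μ.map γ) (Ioi (t : ℝ≥0∞)) = 0 := le_antisymm h0 (zero_le)
    have h2 : (μ.map γ) (Ioi ((s : ℝ≥0) : ℝ≥0∞)) = 0 :=
      le_antisymm ((measure_mono (Ioi_subset_Ioi htb.le)).trans h0'.le) (zero_le)
    have h3 := iic_add_ioi μ γ hγ (s : ℝ≥0∞)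
    rw [h2, add_zero] at h3
    exact absurd h3 hs.ne
  · intro h
    rw [Ioi_coe_iUnion] at h
    have hex : ∃ n : ℕ, (μ.map γ) (Ioi (((t + ((n : ℝ≥0) + 1)⁻¹ : ℝ≥0)) : ℝ≥0∞)) ≠ 0 := by
      by_contra hall
      push_neg at hall
      rw [measure_iUnion_null hall] at h
      exact lt_irrefl 0 h
    obtain ⟨n, hn⟩ := hex
    set s : ℝ≥0 := t + ((n : ℝ≥0) + 1)⁻¹ with hsdef
    have hmem : s ∈ {r : ℝ≥0 | μ {ω | γ ω ≤ (r : ℝ≥0∞)} < 1} := by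
      rw [mem_setOf_eq, iic_map_eq μ γ hγ]
      by_contra hge
      push_neg at hge
      have h1 : (μ.map γ) (Iic (s : ℝ≥0∞)) = 1 := le_antisymm prob_le_one hge
      have h2 := iic_add_ioi μ γ hγ (s : ℝ≥0∞)
      rw [h1] at h2
      have h3 : (μ.map γ) (Ioi (s : ℝ≥0∞)) = 0 := by
        by_contra h3'
        have hlt : (1 : ℝ≥0∞) < 1 + (μ.map γ) (Ioi (s : ℝ≥0∞)) :=
          ENNReal.lt_add_right (by simp) h3'
        rw [h2] at hlt
        exact lt_irrefl _ hlt
      exact hn h3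
    have hle : (s : ℝ≥0∞) ≤ tG μ γ := le_sSup (mem_image_of_mem _ hmem)
    refine lt_of_lt_of_le ?_ hle
    rw [ENNReal.coe_lt_coe, hsdef]
    exact lt_add_of_pos_right t (by positivity)

lemma gbar_pos_iff (hγ : Measurable γ) (t : ℝ≥0) :
    0 < Gbar μ γ t ↔ (t : ℝ≥0∞) < tG μ γ := by
  rw [gbar_eq μ γ hγ, ENNReal.toReal_pos_iff, lt_tG_iff μ γ hγ]
  exact and_iff_left (measure_lt_top _ _)

lemma gbar_antitone : Antitone (Gbar μ γ) := by
  intro s t hst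
  exact ENNReal.toReal_mono (measure_ne_top _ _)
    (measure_mono fun ω hω => lt_of_le_of_lt (ENNReal.coe_le_coe.mpr hst) hω)

lemma gbar_nonneg (t : ℝ≥0) : 0 ≤ Gbar μ γ t := ENNReal.toReal_nonneg

lemma measure_Ioi_tG (hγ : Measurable γ) : (μ.map γ) (Ioi (tG μ γ)) = 0 := by
  rcases eq_or_ne (tG μ γ) ∞ with h | h
  · rw [h]
    simp
  · have hd : tG μ γ = (((tG μ γ).toNNReal : ℝ≥0) : ℝ≥0∞) := (ENNReal.coe_toNNReal h).symm
    rw [hd, Ioi_coe_iUnion]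
    refine measure_iUnion_null fun n => ?_
    by_contra hn
    have h1 := (lt_tG_iff μ γ hγ _).mpr (pos_iff_ne_zero.mpr hn)
    rw [hd, ENNReal.coe_lt_coe] at h1
    exact absurd h1 (not_lt.mpr le_self_add)

lemma tG_pos (hγ : Measurable γ) (hpos : 0 < μ {ω | 0 < γ ω}) : 0 < tG μ γ := by
  have h : 0 < (μ.map γ) (Ioi ((0 : ℝ≥0) : ℝ≥0∞)) := by
    rw [Measure.map_apply hγ measurableSet_Ioi]
    simpa [Set.preimage, Set.mem_Ioi] using hpos
  simpa using (lt_tG_iff μ γ hγ 0).mpr h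

lemma mem_TT_iff (hγ : Measurable γ) (t : ℝ≥0) :
    t ∈ TT μ γ ↔ 0 < (μ.map γ) (Ici (t : ℝ≥0∞)) := by
  rw [Measure.map_apply hγ measurableSet_Ici]
  exact Iff.rfl

lemma mem_TT_of_lt_tG (hγ : Measurable γ) {t : ℝ≥0} (h : (t : ℝ≥0∞) < tG μ γ) : t ∈ TT μ γ := by
  rw [mem_TT_iff μ γ hγ]
  exact lt_of_lt_of_le ((lt_tG_iff μ γ hγ t).mp h) (measure_mono Ioi_subset_Ici_self)

lemma caseB_ne_top (hB : CaseB μ γ) : tG μ γ ≠ ∞ := by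
  intro h
  have hempty : {ω | γ ω = tG μ γ ∧ tG μ γ < ⊤} = ∅ := by
    ext ω; simp [h]
  rw [CaseB, hempty] at hB
  simp at hB

lemma caseB_atom (hγ : Measurable γ) (hB : CaseB μ γ) : 0 < (μ.map γ) {tG μ γ} := by
  rw [Measure.map_apply hγ (measurableSet_singleton _)]
  have : γ ⁻¹' {tG μ γ} = {ω | γ ω = tG μ γ ∧ tG μ γ < ⊤} := by
    ext ω
    simp [lt_top_iff_ne_top.mpr (caseB_ne_top μ γ hB)]
  rw [this]
  exact hB

lemma caseA_atom (hγ : Measurable γ) (hA : CaseA μ γ) (h : tG μ γ ≠ ∞) :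
    (μ.map γ) {tG μ γ} = 0 := by
  rw [Measure.map_apply hγ (measurableSet_singleton _)]
  have heq : γ ⁻¹' {tG μ γ} = {ω | γ ω = tG μ γ ∧ tG μ γ < ⊤} := by
    ext ω
    simp [lt_top_iff_ne_top.mpr h]
  rw [heq]
  exact hA

lemma measure_Ici_tG (hγ : Measurable γ) :
    (μ.map γ) (Ici (tG μ γ)) = (μ.map γ) {tG μ γ} := by
  apply le_antisymm
  · calc (μ.map γ) (Ici (tG μ γ)) = (μ.map γ) ({tG μ γ} ∪ Ioi (tG μ γ)) := by
          rw [← Set.Ioi_insert, insert_eq]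
      _ ≤ (μ.map γ) {tG μ γ} + (μ.map γ) (Ioi (tG μ γ)) := measure_union_le _ _
      _ = (μ.map γ) {tG μ γ} := by rw [measure_Ioi_tG μ γ hγ, add_zero]
  · exact measure_mono (singleton_subset_iff.mpr self_mem_Ici)

/-! ### The filter `leftF` -/

lemma leftF_eventually_lt (a : ℝ≥0∞) : ∀ᶠ t : ℝ≥0 in leftF a, (t : ℝ≥0∞) < a :=
  preimage_mem_comap self_mem_nhdsWithin

lemma leftF_eventually_gt {a x : ℝ≥0∞} (hx : x < a) : ∀ᶠ t : ℝ≥0 in leftF a, x < (t : ℝ≥0∞) :=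
  preimage_mem_comap (mem_nhdsWithin_of_mem_nhds (isOpen_Ioi.mem_nhds hx))

lemma leftF_neBot {a : ℝ≥0∞} (ha : 0 < a) : (leftF a).NeBot := by
  rw [leftF]
  apply Filter.comap_neBot
  intro U hU
  obtain ⟨l, hl, hsub⟩ := (mem_nhdsLT_iff_exists_Ioo_subset' ha).mp hU
  rw [mem_Iio] at hl
  obtain ⟨x, hx1, hx2⟩ := exists_between hl
  refine ⟨x.toNNReal, hsub ⟨?_, ?_⟩⟩
  · rwa [ENNReal.coe_toNNReal (ne_top_of_lt hx2)]
  · rwa [ENNReal.coe_toNNReal (ne_top_of_lt hx2)]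

end BasicG

section Limits
set_option linter.unusedSectionVars false

instance leftF_countablyGenerated (a : ℝ≥0∞) : (leftF a).IsCountablyGenerated := by
  unfold leftF; infer_instance

variable (μ : Measure Ω) [IsProbabilityMeasure μ] (γ : Ω → ℝ≥0∞)

lemma tendsto_gbar_leftF (hγ : Measurable γ) (a : ℝ≥0∞) :
    Tendsto (fun t : ℝ≥0 => Gbar μ γ t) (leftF a) (𝓝 (((μ.map γ) (Ici a)).toReal)) := by
  haveI : IsProbabilityMeasure (μ.map γ) := Measure.isProbabilityMeasure_map hγ.aemeasurable
  set ν := μ.map γ with hν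
  have DC := tendsto_integral_filter_of_dominated_convergence (μ := ν)
      (l := leftF a) (F := fun t : ℝ≥0 => (Ioi ((t : ℝ≥0∞))).indicator (fun _ => (1 : ℝ)))
      (f := (Ici a).indicator (fun _ => (1 : ℝ))) (bound := fun _ => (1 : ℝ))
      (Eventually.of_forall fun t =>
        ((measurable_one.indicator measurableSet_Ioi).aestronglyMeasurable))
      (Eventually.of_forall fun t => Eventually.of_forall fun x => by
        by_cases hx : x ∈ Ioi ((t : ℝ≥0∞)) <;> simp [hx])
      (integrable_const 1)
      (Eventually.of_forall fun x => by
        rcases lt_or_ge x a with hx | hx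
        · have hne : x ∉ Ici a := not_le.mpr hx
          rw [indicator_of_notMem hne]
          refine tendsto_const_nhds.congr' ?_
          filter_upwards [leftF_eventually_gt hx] with t ht
          exact (indicator_of_notMem (not_lt.mpr ht.le) _).symm
        · have hmem : x ∈ Ici a := hx
          rw [indicator_of_mem hmem]
          refine tendsto_const_nhds.congr' ?_
          filter_upwards [leftF_eventually_lt a] with t ht
          exact (indicator_of_mem (mem_Ioi.mpr (lt_of_lt_of_le ht hx)) (fun _ => (1 : ℝ))).symm)
  have h1 : ∀ t : ℝ≥0, ∫ x, (Ioi ((t : ℝ≥0∞))).indicator (fun _ => (1 : ℝ)) x ∂ν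
      = Gbar μ γ t := by
    intro t
    rw [integral_indicator measurableSet_Ioi, setIntegral_const, smul_eq_mul, mul_one, measureReal_def,
      gbar_eq μ γ hγ]
  have h2 : ∫ x, (Ici a).indicator (fun _ => (1 : ℝ)) x ∂ν = (ν (Ici a)).toReal := by
    rw [integral_indicator measurableSet_Ici, setIntegral_const, smul_eq_mul, mul_one, measureReal_def]
  rw [← h2]
  exact DC.congr h1

lemma tendsto_setIntegral_leftF (hγ : Measurable γ) {a : ℝ≥0∞}
    (f : ℝ≥0∞ → ℝ) (hf : Measurable f)
    (hint : IntegrableOn f (Icc 0 a) (μ.map γ)) :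
    Tendsto (fun t : ℝ≥0 => ∫ x in Ioc 0 (t : ℝ≥0∞), f x ∂(μ.map γ)) (leftF a)
      (𝓝 (∫ x in Ioo 0 a, f x ∂(μ.map γ))) := by
  haveI : IsProbabilityMeasure (μ.map γ) := Measure.isProbabilityMeasure_map hγ.aemeasurable
  set ν := μ.map γ with hν
  have DC := tendsto_integral_filter_of_dominated_convergence (μ := ν)
      (l := leftF a) (F := fun t : ℝ≥0 => (Ioc (0 : ℝ≥0∞) (t : ℝ≥0∞)).indicator f)
      (f := (Ioo (0 : ℝ≥0∞) a).indicator f)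
      (bound := (Icc (0 : ℝ≥0∞) a).indicator (fun x => ‖f x‖))
      (Eventually.of_forall fun t => (hf.indicator measurableSet_Ioc).aestronglyMeasurable)
      (by
        filter_upwards [leftF_eventually_lt a] with t ht
        refine Eventually.of_forall fun x => ?_
        by_cases hx : x ∈ Ioc (0 : ℝ≥0∞) (t : ℝ≥0∞)
        · have hmem : x ∈ Icc (0 : ℝ≥0∞) a := ⟨zero_le, hx.2.trans ht.le⟩
          rw [indicator_of_mem hx, indicator_of_mem hmem]
        · rw [indicator_of_notMem hx, norm_zero]
          exact indicator_nonneg (fun y _ => norm_nonneg _) x)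
      ((integrable_indicator_iff measurableSet_Icc).mpr hint.norm)
      (Eventually.of_forall fun x => by
        by_cases hx : x ∈ Ioo (0 : ℝ≥0∞) a
        · rw [indicator_of_mem hx]
          refine tendsto_const_nhds.congr' ?_
          filter_upwards [leftF_eventually_gt hx.2] with t ht
          have hmem : x ∈ Ioc (0 : ℝ≥0∞) (t : ℝ≥0∞) := ⟨hx.1, ht.le⟩
          exact (indicator_of_mem hmem f).symm
        · rw [indicator_of_notMem hx]
          rcases eq_or_ne x 0 with rfl | hx0
          · refine tendsto_const_nhds.congr' (Eventually.of_forall fun t => ?_)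
            exact (indicator_of_notMem (fun h => lt_irrefl _ h.1) f).symm
          · have hxa : a ≤ x := by
              by_contra hlt
              exact hx ⟨pos_iff_ne_zero.mpr hx0, not_le.mp hlt⟩
            refine tendsto_const_nhds.congr' ?_
            filter_upwards [leftF_eventually_lt a] with t ht
            exact (indicator_of_notMem
              (fun h => absurd (h.2.trans_lt (ht.trans_le hxa)) (lt_irrefl x)) f).symm)
  have h1 : ∀ t : ℝ≥0, ∫ x, (Ioc (0 : ℝ≥0∞) (t : ℝ≥0∞)).indicator f x ∂ν
      = ∫ x in Ioc (0 : ℝ≥0∞) (t : ℝ≥0∞), f x ∂ν := fun t => integral_indicator measurableSet_Ioc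
  have h2 : ∫ x, (Ioo (0 : ℝ≥0∞) a).indicator f x ∂ν = ∫ x in Ioo (0 : ℝ≥0∞) a, f x ∂ν :=
    integral_indicator measurableSet_Ioo
  rw [← h2]
  exact DC.congr h1

lemma integral_Ioc_eq_Ioo_add (hγ : Measurable γ) {a : ℝ≥0∞} (h0 : 0 < a)
    (f : ℝ≥0∞ → ℝ) (hf : Measurable f) (hint : IntegrableOn f (Icc 0 a) (μ.map γ)) :
    ∫ x in Ioc 0 a, f x ∂(μ.map γ)
      = (∫ x in Ioo 0 a, f x ∂(μ.map γ)) + ((μ.map γ) {a}).toReal * f a := by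
  haveI : IsProbabilityMeasure (μ.map γ) := Measure.isProbabilityMeasure_map hγ.aemeasurable
  set ν := μ.map γ with hν
  have hsplit : Ioc (0 : ℝ≥0∞) a = Ioo (0 : ℝ≥0∞) a ∪ {a} := (Ioo_union_right h0).symm
  rw [hsplit, setIntegral_union (disjoint_singleton_right.mpr (fun h => lt_irrefl a h.2))
    (measurableSet_singleton a) (hint.mono_set Ioo_subset_Icc_self)
    (hint.mono_set (singleton_subset_iff.mpr ⟨zero_le, le_rfl⟩))]
  congr 1
  rw [Measure.restrict_singleton, integral_smul_measure, integral_dirac, smul_eq_mul]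

end Limits

section Piece
set_option linter.unusedSectionVars false
set_option maxHeartbeats 1000000

variable (μ : Measure Ω) [IsProbabilityMeasure μ] (γ : Ω → ℝ≥0∞)

private lemma ofReal_max_zero (r : ℝ) : ENNReal.ofReal (max r 0) = ENNReal.ofReal r := by
  rcases le_total r 0 with h | h
  · rw [max_eq_right h, ENNReal.ofReal_zero, eq_comm, ENNReal.ofReal_eq_zero]
    exact h
  · rw [max_eq_left h]

private lemma max_sub_max_neg (r : ℝ) : max r 0 - max (-r) 0 = r := by
  rcases le_total r 0 with h | h
  · rw [max_eq_right h, max_eq_left (neg_nonneg.mpr h)]; ring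
  · rw [max_eq_left h, max_eq_right (neg_nonpos.mpr h)]; ring

lemma piece_exists (hγ : Measurable γ) (htG : 0 < tG μ γ)
    (H : ℝ≥0 → ℝ) (hHm : Measurable H)
    (e : ℝ≥0) (q : ℝ) (hq : 0 < q)
    (hqle : ∀ t : ℝ≥0, t ≤ e → (t : ℝ≥0∞) < tG μ γ → q ≤ Gbar μ γ t)
    (hHe : IntegrableOn (fun x : ℝ≥0∞ => H x.toNNReal) (Icc 0 (e : ℝ≥0∞)) (μ.map γ))
    (F : ℝ≥0 → ℝ)
    (hF : ∀ t : ℝ≥0, 0 < t → (t : ℝ≥0∞) < tG μ γ →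
      F t = (Gbar μ γ t)⁻¹ *
        (F 0 * Gbar μ γ 0 - ∫ x in Ioc (0 : ℝ≥0∞) (t : ℝ≥0∞), H x.toNNReal ∂(μ.map γ))) :
    ∃ zz : ℝ≥0 → ℝ, Measurable zz ∧
      IntegrableOn (fun x : ℝ≥0∞ => zz x.toNNReal) (Icc 0 (e : ℝ≥0∞)) (μ.map γ) ∧
      ∀ t : ℝ≥0, t ≤ e → (t : ℝ≥0∞) < tG μ γ →
        ∫ x in Ioc (0 : ℝ≥0∞) (t : ℝ≥0∞), zz x.toNNReal ∂(μ.map γ) = F t - F 0 := by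
  haveI : IsProbabilityMeasure (μ.map γ) := Measure.isProbabilityMeasure_map hγ.aemeasurable
  set ν := μ.map γ with hν
  set E : ℝ≥0∞ := (e : ℝ≥0∞) with hE
  have hEne : E ≠ ∞ := ENNReal.coe_ne_top
  set ψ : ℝ → ℝ≥0∞ := fun y => min ((y.toNNReal : ℝ≥0) : ℝ≥0∞) E with hψ
  have ψmono : Monotone ψ := fun x y h =>
    min_le_min (ENNReal.coe_le_coe.mpr (Real.toNNReal_mono h)) le_rfl
  have ψcont : Continuous ψ :=
    (ENNReal.continuous_coe.comp continuous_real_toNNReal).min continuous_const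
  have ψle : ∀ y, ψ y ≤ E := fun y => min_le_right _ _
  have ψne : ∀ y, ψ y ≠ ∞ := fun y => ne_top_of_le_ne_top hEne (ψle y)
  have ψcoe : ∀ t : ℝ≥0, t ≤ e → ψ (t : ℝ) = (t : ℝ≥0∞) := by
    intro t ht
    simp only [hψ, Real.toNNReal_coe]
    exact min_eq_left (ENNReal.coe_le_coe.mpr ht)
  have ψ0 : ∀ y : ℝ, y ≤ 0 → ψ y = 0 := by
    intro y hy
    simp [hψ, Real.toNNReal_of_nonpos hy]
  have ψtop : ∀ y : ℝ, (e : ℝ) ≤ y → ψ y = E := by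
    intro y hy
    refine min_eq_right (ENNReal.coe_le_coe.mpr ?_)
    have h := Real.toNNReal_mono hy
    rwa [Real.toNNReal_coe] at h
  have rcψ : ∀ (ρ : Measure ℝ≥0∞), IsFiniteMeasure ρ → ∀ x : ℝ,
      ContinuousWithinAt (fun y => (ρ (Iic (ψ y))).toReal) (Ici x) x := by
    intro ρ hρ x
    haveI := hρ
    have h1 : ContinuousWithinAt (fun b => (ρ (Iic b)).toReal) (Ici (ψ x)) (ψ x) :=
      rc_Iic_aux ρ (ψ x) ⟨∞, lt_top_iff_ne_top.mpr (ψne x)⟩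
    exact h1.comp ψcont.continuousWithinAt (fun y hy => ψmono hy)
  have monoψ : ∀ (ρ : Measure ℝ≥0∞), IsFiniteMeasure ρ →
      Monotone (fun y => (ρ (Iic (ψ y))).toReal) := by
    intro ρ hρ x y h
    haveI := hρ
    exact ENNReal.toReal_mono (measure_ne_top _ _)
      (measure_mono (Iic_subset_Iic.mpr (ψmono h)))
  -- the function `gs = 1/max(Ḡ, q)`
  set u : ℝ → ℝ := fun y => (ν (Iic (ψ y))).toReal with hu
  set gs : ℝ → ℝ := fun y => (max (1 - u y) q)⁻¹ with hgs
  have humono : Monotone u := monoψ ν inferInstance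
  have hgs_pos : ∀ y, 0 < max (1 - u y) q := fun y => lt_of_lt_of_le hq (le_max_right _ _)
  have hgsmono : Monotone gs := by
    intro x y hxy
    have h1 : max (1 - u y) q ≤ max (1 - u x) q :=
      max_le_max (by linarith [humono hxy]) le_rfl
    exact inv_anti₀ (hgs_pos y) h1
  have hgs_rc : ∀ x, ContinuousWithinAt gs (Ici x) x := by
    intro x
    have houter : Continuous fun r : ℝ => (max (1 - r) q)⁻¹ := by
      refine Continuous.inv₀ ((continuous_const.sub continuous_id).max continuous_const) ?_
      intro r
      exact ne_of_gt (lt_of_lt_of_le hq (le_max_right _ _))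
    exact (houter.continuousAt).comp_continuousWithinAt (rcψ ν inferInstance x)
  set SFh : StieltjesFunction ℝ := ⟨gs, hgsmono, hgs_rc⟩ with hSFh
  -- densities
  set Hp : ℝ≥0∞ → ℝ≥0∞ := fun x => ENNReal.ofReal (H x.toNNReal) with hHpdef
  set Hm : ℝ≥0∞ → ℝ≥0∞ := fun x => ENNReal.ofReal (-(H x.toNNReal)) with hHmdef
  have hHnn_meas : Measurable fun x : ℝ≥0∞ => H x.toNNReal :=
    hHm.comp ENNReal.measurable_toNNReal
  have hHp_meas : Measurable Hp := ENNReal.measurable_ofReal.comp hHnn_meas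
  have hHm_meas : Measurable Hm := ENNReal.measurable_ofReal.comp hHnn_meas.neg
  set νres := ν.restrict (Ioc 0 E) with hνres
  set ρp := νres.withDensity Hp with hρp
  set ρm := νres.withDensity Hm with hρm
  have hHifull : Integrable (fun x : ℝ≥0∞ => H x.toNNReal) νres :=
    hHe.mono_set Ioc_subset_Icc_self
  have hfinρ : ∀ D : ℝ≥0∞ → ℝ≥0∞, (∀ x, D x ≤ (‖H x.toNNReal‖₊ : ℝ≥0∞)) →
      IsFiniteMeasure (νres.withDensity D) := by
    intro D hD
    refine ⟨?_⟩
    rw [withDensity_apply _ MeasurableSet.univ, setLIntegral_univ]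
    calc ∫⁻ x, D x ∂νres ≤ ∫⁻ x, (‖H x.toNNReal‖₊ : ℝ≥0∞) ∂νres := lintegral_mono hD
      _ < ∞ := hHifull.2
  haveI hρp_fin : IsFiniteMeasure ρp := hfinρ Hp fun x => by
    rw [hHpdef]
    exact Real.ofReal_le_enorm _
  haveI hρm_fin : IsFiniteMeasure ρm := hfinρ Hm fun x => by
    rw [hHmdef]
    calc ENNReal.ofReal (-(H x.toNNReal)) ≤ (‖-(H x.toNNReal)‖₊ : ℝ≥0∞) :=
        Real.ofReal_le_enorm _
      _ = (‖H x.toNNReal‖₊ : ℝ≥0∞) := by rw [nnnorm_neg]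
  set KP : ℝ → ℝ := fun y => (ρp (Iic (ψ y))).toReal with hKP
  set KN : ℝ → ℝ := fun y => (ρm (Iic (ψ y))).toReal with hKN
  set PP : ℝ → ℝ := fun y => KP y * gs y with hPP
  set NN : ℝ → ℝ := fun y => KN y * gs y with hNN
  have hgs_nonneg : ∀ y, 0 ≤ gs y := fun y => le_of_lt (inv_pos.mpr (hgs_pos y))
  have hPPmono : Monotone PP := fun x y h =>
    mul_le_mul (monoψ ρp inferInstance h) (hgsmono h) (hgs_nonneg x) ENNReal.toReal_nonneg
  have hNNmono : Monotone NN := fun x y h =>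
    mul_le_mul (monoψ ρm inferInstance h) (hgsmono h) (hgs_nonneg x) ENNReal.toReal_nonneg
  set SFP : StieltjesFunction ℝ := ⟨PP, hPPmono, fun x => (rcψ ρp inferInstance x).mul (hgs_rc x)⟩
    with hSFP
  set SFN : StieltjesFunction ℝ := ⟨NN, hNNmono, fun x => (rcψ ρm inferInstance x).mul (hgs_rc x)⟩
    with hSFN
  -- pushforward measures on ℝ
  set νb := νres.map ENNReal.toReal with hνb
  set δp := ρp.map ENNReal.toReal with hδp
  set δm := ρm.map ENNReal.toReal with hδm
  haveI hνb_fin : IsFiniteMeasure νb := by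
    refine ⟨?_⟩
    rw [hνb, Measure.map_apply ENNReal.measurable_toReal MeasurableSet.univ, preimage_univ]
    exact measure_lt_top _ _
  haveI hδp_fin : IsFiniteMeasure δp := by
    refine ⟨?_⟩
    rw [hδp, Measure.map_apply ENNReal.measurable_toReal MeasurableSet.univ, preimage_univ]
    exact measure_lt_top _ _
  haveI hδm_fin : IsFiniteMeasure δm := by
    refine ⟨?_⟩
    rw [hδm, Measure.map_apply ENNReal.measurable_toReal MeasurableSet.univ, preimage_univ]
    exact measure_lt_top _ _
  -- inclusion of intervals
  have INC : ∀ a b : ℝ, Ioc (ψ a) (ψ b) ⊆ (ENNReal.toReal ⁻¹' (Ioc a b)) ∩ Ioc 0 E := by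
    intro a b x hx
    have hxE : x ≤ E := hx.2.trans (ψle b)
    have hxtop : x ≠ ∞ := ne_top_of_le_ne_top hEne hxE
    have hx0 : 0 < x := lt_of_le_of_lt (zero_le) hx.1
    have hbig : ENNReal.toReal x ≤ max b 0 := by
      have h1 : x ≤ ((b.toNNReal : ℝ≥0) : ℝ≥0∞) := hx.2.trans (min_le_left _ _)
      have h2 := ENNReal.toReal_mono ENNReal.coe_ne_top h1
      rwa [ENNReal.coe_toReal, Real.coe_toNNReal'] at h2
    refine ⟨⟨?_, ?_⟩, hx0, hxE⟩
    · rcases lt_or_ge a 0 with ha | ha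
      · exact ha.trans (ENNReal.toReal_pos (ne_of_gt hx0) hxtop)
      · rcases le_or_gt ((a.toNNReal : ℝ≥0) : ℝ≥0∞) E with haE | haE
        · have hψa : ψ a = ((a.toNNReal : ℝ≥0) : ℝ≥0∞) := min_eq_left haE
          have h1 : ((a.toNNReal : ℝ≥0) : ℝ≥0∞) < x := by rw [← hψa]; exact hx.1
          have h2 := (ENNReal.toReal_lt_toReal ENNReal.coe_ne_top hxtop).mpr h1
          rwa [ENNReal.coe_toReal, Real.coe_toNNReal a ha] at h2
        · exfalso
          have hψa : ψ a = E := min_eq_right haE.le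
          have h1 : E < x := by rw [← hψa]; exact hx.1
          exact absurd hxE (not_le.mpr h1)
    · rcases le_or_gt 0 b with hb | hb
      · rwa [max_eq_left hb] at hbig
      · exfalso
        have hψb : ψ b = 0 := ψ0 b hb.le
        rw [hψb] at hx
        exact absurd hx.2 (not_le.mpr hx0)
  have hνb_Ioc : ∀ a b : ℝ, ν (Ioc (ψ a) (ψ b)) ≤ νb (Ioc a b) := by
    intro a b
    rw [hνb, Measure.map_apply ENNReal.measurable_toReal measurableSet_Ioc, hνres,
      Measure.restrict_apply (ENNReal.measurable_toReal measurableSet_Ioc)]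
    exact measure_mono (INC a b)
  have hδp_Ioc : ∀ a b : ℝ, ρp (Ioc (ψ a) (ψ b)) ≤ δp (Ioc a b) := by
    intro a b
    rw [hδp, Measure.map_apply ENNReal.measurable_toReal measurableSet_Ioc]
    exact measure_mono fun x hx => (INC a b hx).1
  have hδm_Ioc : ∀ a b : ℝ, ρm (Ioc (ψ a) (ψ b)) ≤ δm (Ioc a b) := by
    intro a b
    rw [hδm, Measure.map_apply ENNReal.measurable_toReal measurableSet_Ioc]
    exact measure_mono fun x hx => (INC a b hx).1
  -- increments of Iic across intervals
  have hIicIoc : ∀ (ρ : Measure ℝ≥0∞), IsFiniteMeasure ρ → ∀ a b : ℝ, a ≤ b →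
      (ρ (Iic (ψ b))).toReal - (ρ (Iic (ψ a))).toReal = (ρ (Ioc (ψ a) (ψ b))).toReal := by
    intro ρ hρ a b hab
    haveI := hρ
    rw [← Iic_union_Ioc_eq_Iic (ψmono hab),
      measure_union (Iic_disjoint_Ioc le_rfl) measurableSet_Ioc,
      ENNReal.toReal_add (measure_ne_top _ _) (measure_ne_top _ _)]
    ring
  -- increment bound for gs
  have hgs_diff : ∀ a b : ℝ, a ≤ b → gs b - gs a ≤ (q⁻¹ * q⁻¹) * (u b - u a) := by
    intro a b hab
    set A := max (1 - u a) q with hA'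
    set B := max (1 - u b) q with hB'
    have hA : q ≤ A := le_max_right _ _
    have hB : q ≤ B := le_max_right _ _
    have hBA : B ≤ A := max_le_max (by linarith [humono hab]) le_rfl
    have hA0 : (0 : ℝ) < A := lt_of_lt_of_le hq hA
    have hB0 : (0 : ℝ) < B := lt_of_lt_of_le hq hB
    have huab : u a ≤ u b := humono hab
    have h2 : A - B ≤ u b - u a := by
      have h3 := abs_max_sub_max_le_abs (1 - u a) (1 - u b) q
      rw [abs_of_nonneg (by linarith : (0 : ℝ) ≤ A - B)] at h3
      have h4 : |1 - u a - (1 - u b)| = u b - u a := by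
        have h5 : (1 - u a - (1 - u b)) = u b - u a := by ring
        rw [h5]
        exact abs_of_nonneg (by linarith)
      linarith
    have hgseq : gs b - gs a = (A - B) * (A⁻¹ * B⁻¹) := by
      show B⁻¹ - A⁻¹ = _
      have h6 : (A - B) * (A⁻¹ * B⁻¹) = A * A⁻¹ * B⁻¹ - B * B⁻¹ * A⁻¹ := by ring
      rw [h6, mul_inv_cancel₀ hA0.ne', mul_inv_cancel₀ hB0.ne', one_mul, one_mul]
    calc gs b - gs a = (A - B) * (A⁻¹ * B⁻¹) := hgseq
      _ ≤ (u b - u a) * (q⁻¹ * q⁻¹) := by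
          apply mul_le_mul h2 ?_ (by positivity) (by linarith)
          exact mul_le_mul (inv_anti₀ hq hA) (inv_anti₀ hq hB)
            (by positivity) (by positivity)
      _ = (q⁻¹ * q⁻¹) * (u b - u a) := by ring
  -- finiteness of the Stieltjes measures
  have hsf_fin : ∀ f : StieltjesFunction ℝ, (∀ x y : ℝ, ψ x = ψ y → f x = f y) →
      IsFiniteMeasure f.measure := by
    intro f hf
    exact sf_measure_finite f 0 (e : ℝ)
      (fun x hx => hf x 0 (by rw [ψ0 x hx, ψ0 0 le_rfl]))
      (fun x hx => hf x (e : ℝ) (by rw [ψtop x hx, ψtop (e : ℝ) le_rfl]))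
  haveI hSFh_fin : IsFiniteMeasure SFh.measure := by
    refine hsf_fin SFh fun x y hxy => ?_
    show gs x = gs y
    simp only [hgs, hu]
    rw [hxy]
  haveI hSFP_fin : IsFiniteMeasure SFP.measure := by
    refine hsf_fin SFP fun x y hxy => ?_
    show PP x = PP y
    simp only [hPP, hKP, hgs, hu]
    rw [hxy]
  haveI hSFN_fin : IsFiniteMeasure SFN.measure := by
    refine hsf_fin SFN fun x y hxy => ?_
    show NN x = NN y
    simp only [hNN, hKN, hgs, hu]
    rw [hxy]
  -- interval bound and absolute continuity for SFh
  have key_h : ∀ a b : ℝ, a < b →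
      SFh.measure (Ioc a b) ≤ (ENNReal.ofReal (q⁻¹ * q⁻¹) • νb) (Ioc a b) := by
    intro a b hab
    rw [StieltjesFunction.measure_Ioc, Measure.smul_apply, smul_eq_mul]
    calc ENNReal.ofReal (SFh b - SFh a) ≤ ENNReal.ofReal ((q⁻¹ * q⁻¹) * (u b - u a)) :=
        ENNReal.ofReal_le_ofReal (hgs_diff a b hab.le)
      _ = ENNReal.ofReal (q⁻¹ * q⁻¹) * ENNReal.ofReal (u b - u a) :=
        ENNReal.ofReal_mul (by positivity)
      _ = ENNReal.ofReal (q⁻¹ * q⁻¹) * ν (Ioc (ψ a) (ψ b)) := by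
          rw [show u b - u a = (ν (Ioc (ψ a) (ψ b))).toReal from
            hIicIoc ν inferInstance a b hab.le, ENNReal.ofReal_toReal (measure_ne_top _ _)]
      _ ≤ ENNReal.ofReal (q⁻¹ * q⁻¹) * νb (Ioc a b) := mul_le_mul_right (hνb_Ioc a b) _
  haveI : IsFiniteMeasure (ENNReal.ofReal (q⁻¹ * q⁻¹) • νb) := by
    refine ⟨?_⟩
    rw [Measure.smul_apply, smul_eq_mul]
    exact ENNReal.mul_lt_top ENNReal.ofReal_lt_top (measure_lt_top _ _)
  have GLh : SFh.measure ≤ ENNReal.ofReal (q⁻¹ * q⁻¹) • νb :=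
    measure_le_of_Ioc_le _ _ key_h
  have ACh : SFh.measure ≪ νb :=
    (Measure.absolutelyContinuous_of_le GLh).trans Measure.smul_absolutelyContinuous
  -- interval bound and absolute continuity for SFP, SFN
  have hgs_le : ∀ y, gs y ≤ q⁻¹ := fun y => by
    rw [hgs]
    exact inv_anti₀ hq (le_max_right _ _)
  have key_PN : ∀ (ρ : Measure ℝ≥0∞) (hρ : IsFiniteMeasure ρ) (SS : StieltjesFunction ℝ)
      (hSS : ∀ y : ℝ, SS y = (ρ (Iic (ψ y))).toReal * gs y)
      (hρIoc : ∀ a b : ℝ, ρ (Ioc (ψ a) (ψ b)) ≤ (ρ.map ENNReal.toReal) (Ioc a b)),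
      ∀ a b : ℝ, a < b → SS.measure (Ioc a b) ≤
        ((ENNReal.ofReal (ρ univ).toReal) • SFh.measure
          + (ENNReal.ofReal q⁻¹) • (ρ.map ENNReal.toReal)) (Ioc a b) := by
    intro ρ hρ SS hSS hρIoc a b hab
    haveI := hρ
    set K : ℝ → ℝ := fun y => (ρ (Iic (ψ y))).toReal with hK
    have hKd : K b - K a = (ρ (Ioc (ψ a) (ψ b))).toReal := hIicIoc ρ hρ a b hab.le
    have hKle : ∀ y, K y ≤ (ρ univ).toReal := fun y =>
      ENNReal.toReal_mono (measure_ne_top _ _) (measure_mono (subset_univ _))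
    have hstep : SS b - SS a ≤ (ρ univ).toReal * (gs b - gs a) + q⁻¹ * (K b - K a) := by
      rw [hSS a, hSS b]
      have h1 : K b * gs b - K a * gs a = K b * (gs b - gs a) + (K b - K a) * gs a := by ring
      have h2 : K b * (gs b - gs a) ≤ (ρ univ).toReal * (gs b - gs a) :=
        mul_le_mul_of_nonneg_right (hKle b) (by linarith [hgsmono hab.le])
      have h3 : (K b - K a) * gs a ≤ (K b - K a) * q⁻¹ :=
        mul_le_mul_of_nonneg_left (hgs_le a) (by rw [hKd]; exact ENNReal.toReal_nonneg)
      show K b * gs b - K a * gs a ≤ _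
      rw [h1]
      linarith
    rw [StieltjesFunction.measure_Ioc, Measure.add_apply, Measure.smul_apply,
      Measure.smul_apply, smul_eq_mul, smul_eq_mul, StieltjesFunction.measure_Ioc]
    calc ENNReal.ofReal (SS b - SS a)
        ≤ ENNReal.ofReal ((ρ univ).toReal * (gs b - gs a) + q⁻¹ * (K b - K a)) :=
          ENNReal.ofReal_le_ofReal hstep
      _ ≤ ENNReal.ofReal ((ρ univ).toReal * (gs b - gs a))
            + ENNReal.ofReal (q⁻¹ * (K b - K a)) := ENNReal.ofReal_add_le
      _ = ENNReal.ofReal (ρ univ).toReal * ENNReal.ofReal (gs b - gs a)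
            + ENNReal.ofReal q⁻¹ * ENNReal.ofReal (K b - K a) := by
          rw [ENNReal.ofReal_mul ENNReal.toReal_nonneg, ENNReal.ofReal_mul (by positivity)]
      _ ≤ ENNReal.ofReal (ρ univ).toReal * ENNReal.ofReal (SFh b - SFh a)
            + ENNReal.ofReal q⁻¹ * (ρ.map ENNReal.toReal) (Ioc a b) := by
          apply add_le_add
          · exact le_rfl
          · rw [hKd, ENNReal.ofReal_toReal (measure_ne_top _ _)]
            exact mul_le_mul_right (hρIoc a b) _
  have add_ac : ∀ m1 m2 : Measure ℝ, m1 ≪ νb → m2 ≪ νb → (m1 + m2) ≪ νb := by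
    intro m1 m2 h1 h2
    refine Measure.AbsolutelyContinuous.mk fun s hs h0 => ?_
    rw [Measure.add_apply, h1 h0, h2 h0, add_zero]
  have smul_ac' : ∀ (c : ℝ≥0∞) (mm : Measure ℝ), mm ≪ νb → (c • mm) ≪ νb := fun c mm h =>
    Measure.smul_absolutelyContinuous.trans h
  have ac_of_le_combo : ∀ (S : Measure ℝ), IsFiniteMeasure S → ∀ (c1 c2 : ℝ≥0∞), c1 ≠ ∞ → c2 ≠ ∞ →
      ∀ δ : Measure ℝ, IsFiniteMeasure δ → δ ≪ νb →
      (∀ a b : ℝ, a < b → S (Ioc a b) ≤ (c1 • SFh.measure + c2 • δ) (Ioc a b)) →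
      S ≪ νb := by
    intro S hS c1 c2 hc1 hc2 δ hδ hδac hle
    haveI := hS; haveI := hδ
    haveI : IsFiniteMeasure (c1 • SFh.measure + c2 • δ) := by
      refine ⟨?_⟩
      rw [Measure.add_apply, Measure.smul_apply, Measure.smul_apply, smul_eq_mul, smul_eq_mul]
      exact ENNReal.add_lt_top.mpr ⟨ENNReal.mul_lt_top hc1.lt_top (measure_lt_top _ _),
        ENNReal.mul_lt_top hc2.lt_top (measure_lt_top _ _)⟩
    have hSle : S ≤ c1 • SFh.measure + c2 • δ := measure_le_of_Ioc_le _ _ hle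
    refine (Measure.absolutelyContinuous_of_le hSle).trans ?_
    refine Measure.AbsolutelyContinuous.mk fun s hs h0 => ?_
    rw [Measure.add_apply, Measure.smul_apply, Measure.smul_apply,
      ACh h0, hδac h0, smul_zero, smul_zero, add_zero]
  have ACδp : δp ≪ νb := by
    rw [hδp, hνb]
    exact Measure.AbsolutelyContinuous.map (withDensity_absolutelyContinuous νres Hp)
      ENNReal.measurable_toReal
  have ACδm : δm ≪ νb := by
    rw [hδm, hνb]
    exact Measure.AbsolutelyContinuous.map (withDensity_absolutelyContinuous νres Hm)
      ENNReal.measurable_toReal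
  have ACP : SFP.measure ≪ νb :=
    ac_of_le_combo SFP.measure inferInstance (ENNReal.ofReal (ρp univ).toReal)
      (ENNReal.ofReal q⁻¹) ENNReal.ofReal_ne_top ENNReal.ofReal_ne_top δp inferInstance ACδp
      (key_PN ρp inferInstance SFP (fun y => rfl) hδp_Ioc)
  have ACN : SFN.measure ≪ νb :=
    ac_of_le_combo SFN.measure inferInstance (ENNReal.ofReal (ρm univ).toReal)
      (ENNReal.ofReal q⁻¹) ENNReal.ofReal_ne_top ENNReal.ofReal_ne_top δm inferInstance ACδm
      (key_PN ρm inferInstance SFN (fun y => rfl) hδm_Ioc)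
  -- the signed measures encoding F
  set cF : ℝ := F 0 * Gbar μ γ 0 with hcF
  set cp : ℝ := max cF 0 with hcp
  set cm : ℝ := max (-cF) 0 with hcm
  have hcp0 : 0 ≤ cp := le_max_right _ _
  have hcm0 : 0 ≤ cm := le_max_right _ _
  set Λp := ENNReal.ofReal cp • SFh.measure + SFN.measure with hΛp
  set Λm := ENNReal.ofReal cm • SFh.measure + SFP.measure with hΛm
  haveI hΛp_fin : IsFiniteMeasure Λp := by
    rw [hΛp]
    haveI : IsFiniteMeasure (ENNReal.ofReal cp • SFh.measure) :=
      ⟨by rw [Measure.smul_apply, smul_eq_mul]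
          exact ENNReal.mul_lt_top ENNReal.ofReal_lt_top (measure_lt_top _ _)⟩
    infer_instance
  haveI hΛm_fin : IsFiniteMeasure Λm := by
    rw [hΛm]
    haveI : IsFiniteMeasure (ENNReal.ofReal cm • SFh.measure) :=
      ⟨by rw [Measure.smul_apply, smul_eq_mul]
          exact ENNReal.mul_lt_top ENNReal.ofReal_lt_top (measure_lt_top _ _)⟩
    infer_instance
  have ACΛp : Λp ≪ νb := add_ac _ _ (smul_ac' _ _ ACh) ACN
  have ACΛm : Λm ≪ νb := add_ac _ _ (smul_ac' _ _ ACh) ACP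
  set zloc : ℝ → ℝ := fun y => (Λp.rnDeriv νb y).toReal - (Λm.rnDeriv νb y).toReal with hzloc
  have hzm : Measurable zloc := ((Measure.measurable_rnDeriv Λp νb).ennreal_toReal).sub
    ((Measure.measurable_rnDeriv Λm νb).ennreal_toReal)
  have hzint : Integrable zloc νb :=
    (Measure.integrable_toReal_rnDeriv (μ := Λp) (ν := νb)).sub
      (Measure.integrable_toReal_rnDeriv (μ := Λm) (ν := νb))
  -- value identities
  have hval_gs : ∀ t : ℝ≥0, t ≤ e → (t : ℝ≥0∞) < tG μ γ → gs (t : ℝ) = (Gbar μ γ t)⁻¹ := by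
    intro t hte htG'
    have h1 : u (t : ℝ) = (ν (Iic (t : ℝ≥0∞))).toReal := by
      simp only [hu]
      rw [ψcoe t hte]
    have h2 : (ν (Iic (t : ℝ≥0∞))).toReal + Gbar μ γ t = 1 := by
      rw [gbar_eq μ γ hγ, ← hν, ← ENNReal.toReal_add (measure_ne_top _ _) (measure_ne_top _ _),
        hν, iic_add_ioi μ γ hγ]
      simp
    have h3 : 1 - u (t : ℝ) = Gbar μ γ t := by rw [h1]; linarith
    simp only [hgs]
    rw [h3, max_eq_left (hqle t hte htG')]
  have hwd_Iic : ∀ D : ℝ≥0∞ → ℝ≥0∞, Measurable D → ∀ t : ℝ≥0, t ≤ e →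
      (νres.withDensity D) (Iic (ψ (t : ℝ))) = ∫⁻ x in Ioc (0 : ℝ≥0∞) (t : ℝ≥0∞), D x ∂ν := by
    intro D hD t hte
    have hseteq : Iic ((t : ℝ≥0∞)) ∩ Ioc 0 E = Ioc (0 : ℝ≥0∞) (t : ℝ≥0∞) := by
      ext x
      simp only [mem_inter_iff, mem_Iic, mem_Ioc]
      constructor
      · rintro ⟨h1, h2, h3⟩
        exact ⟨h2, h1⟩
      · rintro ⟨h1, h2⟩
        exact ⟨h2, h1, h2.trans (ENNReal.coe_le_coe.mpr hte)⟩
    rw [withDensity_apply _ measurableSet_Iic, hνres,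
      Measure.restrict_restrict measurableSet_Iic, ψcoe t hte, hseteq]
  have hBoch : ∀ g : ℝ≥0∞ → ℝ, Measurable g → ∀ t : ℝ≥0,
      (∫⁻ x in Ioc (0 : ℝ≥0∞) (t : ℝ≥0∞), ENNReal.ofReal (g x) ∂ν).toReal
        = ∫ x in Ioc (0 : ℝ≥0∞) (t : ℝ≥0∞), max (g x) 0 ∂ν := by
    intro g hg t
    have h := integral_eq_lintegral_of_nonneg_ae (μ := ν.restrict (Ioc (0 : ℝ≥0∞) (t : ℝ≥0∞)))
      (f := fun x => max (g x) 0) (Eventually.of_forall fun x => le_max_right _ _)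
      ((hg.max measurable_const).aestronglyMeasurable)
    rw [h]
    congr 1
    exact lintegral_congr fun x => (ofReal_max_zero (g x)).symm
  have hval_KP : ∀ t : ℝ≥0, t ≤ e →
      KP (t : ℝ) = ∫ x in Ioc (0 : ℝ≥0∞) (t : ℝ≥0∞), max (H x.toNNReal) 0 ∂ν := by
    intro t hte
    simp only [hKP, hρp]
    rw [hwd_Iic Hp hHp_meas t hte]
    exact hBoch _ hHnn_meas t
  have hval_KN : ∀ t : ℝ≥0, t ≤ e →
      KN (t : ℝ) = ∫ x in Ioc (0 : ℝ≥0∞) (t : ℝ≥0∞), max (-(H x.toNNReal)) 0 ∂ν := by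
    intro t hte
    simp only [hKN, hρm]
    rw [hwd_Iic Hm hHm_meas t hte]
    exact hBoch _ hHnn_meas.neg t
  have hsplitH : ∀ t : ℝ≥0, t ≤ e →
      ∫ x in Ioc (0 : ℝ≥0∞) (t : ℝ≥0∞), H x.toNNReal ∂ν = KP (t : ℝ) - KN (t : ℝ) := by
    intro t hte
    have hint : IntegrableOn (fun x : ℝ≥0∞ => H x.toNNReal) (Ioc 0 (t : ℝ≥0∞)) ν :=
      hHe.mono_set fun x hx => ⟨zero_le, hx.2.trans (ENNReal.coe_le_coe.mpr hte)⟩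
    have hi1 : IntegrableOn (fun x : ℝ≥0∞ => max (H x.toNNReal) 0) (Ioc 0 (t : ℝ≥0∞)) ν :=
      hint.pos_part
    have hi2 : IntegrableOn (fun x : ℝ≥0∞ => max (-(H x.toNNReal)) 0) (Ioc 0 (t : ℝ≥0∞)) ν :=
      hint.neg.pos_part
    rw [hval_KP t hte, hval_KN t hte, ← integral_sub hi1 hi2]
    exact integral_congr_ae (Eventually.of_forall fun x => (max_sub_max_neg _).symm)
  have hFval : ∀ t : ℝ≥0, t ≤ e → (t : ℝ≥0∞) < tG μ γ →
      F t = (Gbar μ γ t)⁻¹ * (cF - (KP (t : ℝ) - KN (t : ℝ))) := by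
    intro t hte htG'
    rcases eq_or_ne t 0 with rfl | ht0
    · have hG0 : 0 < Gbar μ γ 0 := (gbar_pos_iff μ γ hγ 0).mpr (by simpa using htG)
      have hK0 : KP ((0 : ℝ≥0) : ℝ) - KN ((0 : ℝ≥0) : ℝ) = 0 := by
        rw [← hsplitH 0 zero_le]
        have hempty : Ioc (0 : ℝ≥0∞) ((0 : ℝ≥0) : ℝ≥0∞) = ∅ := by simp
        rw [hempty, Measure.restrict_empty, integral_zero_measure]
      rw [hK0, hcF, sub_zero]
      field_simp
    · rw [hF t (pos_iff_ne_zero.mpr ht0) htG', hsplitH t hte, hcF]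
  -- representation over ℝ
  have hrepR : ∀ t : ℝ≥0, t ≤ e → (t : ℝ≥0∞) < tG μ γ →
      ∫ y in Ioc (0 : ℝ) ((t : ℝ≥0) : ℝ), zloc y ∂νb = F t - F 0 := by
    intro t hte htG'
    have htG0 : ((0 : ℝ≥0) : ℝ≥0∞) < tG μ γ := by simpa using htG
    have hz1 : ∫ y in Ioc (0 : ℝ) (t : ℝ), (Λp.rnDeriv νb y).toReal ∂νb
        = (Λp (Ioc (0 : ℝ) (t : ℝ))).toReal :=
      Measure.setIntegral_toReal_rnDeriv ACΛp _
    have hz2 : ∫ y in Ioc (0 : ℝ) (t : ℝ), (Λm.rnDeriv νb y).toReal ∂νb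
        = (Λm (Ioc (0 : ℝ) (t : ℝ))).toReal :=
      Measure.setIntegral_toReal_rnDeriv ACΛm _
    have hsub : ∫ y in Ioc (0 : ℝ) (t : ℝ), zloc y ∂νb
        = (Λp (Ioc (0 : ℝ) (t : ℝ))).toReal - (Λm (Ioc (0 : ℝ) (t : ℝ))).toReal := by
      simp only [hzloc]
      rw [integral_sub (Measure.integrable_toReal_rnDeriv.integrableOn)
        (Measure.integrable_toReal_rnDeriv.integrableOn), hz1, hz2]
    have hΛval : ∀ (c' : ℝ), 0 ≤ c' → ∀ SS : StieltjesFunction ℝ,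
        ((ENNReal.ofReal c' • SFh.measure + SS.measure) (Ioc (0 : ℝ) (t : ℝ))).toReal
          = c' * (SFh (t : ℝ) - SFh 0) + (SS (t : ℝ) - SS 0) := by
      intro c' hc' SS
      rw [Measure.add_apply, Measure.smul_apply, smul_eq_mul,
        StieltjesFunction.measure_Ioc, StieltjesFunction.measure_Ioc,
        ENNReal.toReal_add (ENNReal.mul_ne_top ENNReal.ofReal_ne_top ENNReal.ofReal_ne_top)
          ENNReal.ofReal_ne_top,
        ENNReal.toReal_mul, ENNReal.toReal_ofReal hc',
        ENNReal.toReal_ofReal (sub_nonneg.mpr (SFh.mono t.coe_nonneg)),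
        ENNReal.toReal_ofReal (sub_nonneg.mpr (SS.mono t.coe_nonneg))]
    rw [hsub, hΛp, hΛm, hΛval cp hcp0 SFN, hΛval cm hcm0 SFP]
    have hgst := hval_gs t hte htG'
    have hgs0 := hval_gs 0 zero_le htG0
    have hFt := hFval t hte htG'
    have hF0' := hFval 0 zero_le htG0
    simp only [NNReal.coe_zero] at hgs0 hF0'
    have hcpm : cp - cm = cF := by rw [hcp, hcm]; exact max_sub_max_neg cF
    have hSFh_eq : ∀ y : ℝ, SFh y = gs y := fun y => rfl
    have hSFN_eq : ∀ y : ℝ, SFN y = KN y * gs y := fun y => rfl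
    have hSFP_eq : ∀ y : ℝ, SFP y = KP y * gs y := fun y => rfl
    rw [hSFh_eq, hSFh_eq, hSFN_eq, hSFN_eq, hSFP_eq, hSFP_eq, hFt, hF0', hgst, hgs0, ← hcpm]
    ring
  -- transport back to ℝ≥0∞
  set zz : ℝ≥0 → ℝ := fun s => zloc (s : ℝ) with hzz
  have hzzm : Measurable zz := hzm.comp NNReal.continuous_coe.measurable
  have htrans : ∀ t : ℝ≥0, t ≤ e →
      ∫ x in Ioc (0 : ℝ≥0∞) (t : ℝ≥0∞), zz x.toNNReal ∂ν
        = ∫ y in Ioc (0 : ℝ) ((t : ℝ≥0) : ℝ), zloc y ∂νb := by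
    intro t hte
    rw [hνb, setIntegral_map measurableSet_Ioc hzm.aestronglyMeasurable
      ENNReal.measurable_toReal.aemeasurable, hνres,
      Measure.restrict_restrict (ENNReal.measurable_toReal measurableSet_Ioc)]
    have hset : ENNReal.toReal ⁻¹' Ioc (0 : ℝ) ((t : ℝ≥0) : ℝ) ∩ Ioc 0 E
        = Ioc (0 : ℝ≥0∞) (t : ℝ≥0∞) := by
      ext x
      simp only [mem_inter_iff, mem_preimage, mem_Ioc]
      constructor
      · rintro ⟨⟨h1, h2⟩, h3, h4⟩
        have hxt : x ≠ ∞ := ne_top_of_le_ne_top hEne h4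
        refine ⟨h3, ?_⟩
        have h5 := Real.toNNReal_mono h2
        rw [Real.toNNReal_coe] at h5
        rw [← ENNReal.coe_toNNReal hxt, ENNReal.coe_le_coe]
        rwa [ENNReal.toReal, Real.toNNReal_coe] at h5
      · rintro ⟨h1, h2⟩
        have hxt : x ≠ ∞ := ne_top_of_le_ne_top ENNReal.coe_ne_top h2
        have hx0 : x ≠ 0 := ne_of_gt h1
        refine ⟨⟨ENNReal.toReal_pos hx0 hxt, ?_⟩, h1, h2.trans (ENNReal.coe_le_coe.mpr hte)⟩
        calc x.toReal ≤ ((t : ℝ≥0∞)).toReal := ENNReal.toReal_mono ENNReal.coe_ne_top h2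
          _ = (t : ℝ) := by rw [ENNReal.coe_toReal]
    rw [hset]
    rfl
  have hzzint : IntegrableOn (fun x : ℝ≥0∞ => zz x.toNNReal) (Icc 0 E) ν := by
    have h2 : Integrable (fun x : ℝ≥0∞ => zloc x.toReal) νres := by
      rw [hνb] at hzint
      exact (integrable_map_measure hzm.aestronglyMeasurable
        ENNReal.measurable_toReal.aemeasurable).mp hzint
    have h1 : IntegrableOn (fun x : ℝ≥0∞ => zz x.toNNReal) (Ioc 0 E) ν := h2
    have h0 : IntegrableOn (fun x : ℝ≥0∞ => zz x.toNNReal) {0} ν := by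
      rw [integrableOn_singleton_iff]
      exact Or.inr (measure_lt_top _ _)
    have hsplit : Icc (0 : ℝ≥0∞) E = {0} ∪ Ioc 0 E := by
      ext x
      simp only [mem_Icc, mem_union, mem_singleton_iff, mem_Ioc]
      constructor
      · rintro ⟨-, h2'⟩
        rcases eq_or_ne x 0 with rfl | hx0
        · exact Or.inl rfl
        · exact Or.inr ⟨pos_iff_ne_zero.mpr hx0, h2'⟩
      · rintro (rfl | ⟨-, h2'⟩)
        · exact ⟨le_rfl, zero_le⟩
        · exact ⟨zero_le, h2'⟩
    rw [hsplit]
    exact h0.union h1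
  refine ⟨zz, hzzm, hzzint, ?_⟩
  intro t hte htG'
  rw [htrans t hte, hrepR t hte htG']

end Piece

section Glue
set_option linter.unusedSectionVars false
set_option maxHeartbeats 1000000

variable (μ : Measure Ω) [IsProbabilityMeasure μ] (γ : Ω → ℝ≥0∞)

private lemma Icc_zero_split (b : ℝ≥0∞) : Icc (0 : ℝ≥0∞) b = {0} ∪ Ioc 0 b := by
  ext x
  simp only [mem_Icc, mem_union, mem_singleton_iff, mem_Ioc]
  constructor
  · rintro ⟨-, h2⟩
    rcases eq_or_ne x 0 with rfl | hx0
    · exact Or.inl rfl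
    · exact Or.inr ⟨pos_iff_ne_zero.mpr hx0, h2⟩
  · rintro (rfl | ⟨-, h2⟩)
    · exact ⟨le_rfl, zero_le⟩
    · exact ⟨zero_le, h2⟩

lemma glue_exists (hγ : Measurable γ)
    (F : ℝ≥0 → ℝ)
    (e : ℕ → ℝ≥0) (hEmono : Monotone e)
    (hcov1 : ∀ t : ℝ≥0, (t : ℝ≥0∞) < tG μ γ → ∃ n, t ≤ e n)
    (hcov2 : ∀ t ∈ TT μ γ, ∃ n, t ≤ e n)
    (hzs : ∀ n : ℕ, ∃ zz : ℝ≥0 → ℝ, Measurable zz ∧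
      IntegrableOn (fun x : ℝ≥0∞ => zz x.toNNReal) (Icc 0 ((e n : ℝ≥0) : ℝ≥0∞)) (μ.map γ) ∧
      ∀ t : ℝ≥0, t ≤ e n → (t : ℝ≥0∞) < tG μ γ →
        ∫ x in Ioc (0 : ℝ≥0∞) (t : ℝ≥0∞), zz x.toNNReal ∂(μ.map γ) = F t - F 0) :
    ∃ z : ℝ≥0 → ℝ, LocAC μ γ F z := by
  classical
  choose zs hzm hzint hzrep using hzs
  set ν := μ.map γ with hν
  set A : Set ℝ≥0 := ⋃ n, Iic (e n) with hA
  have hAm : MeasurableSet A := MeasurableSet.iUnion fun n => measurableSet_Iic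
  set p : ℕ → ℝ≥0 → Prop := fun n s => s ≤ e n ∨ s ∉ A with hp
  have hpall : ∀ s, ∃ n, p n s := by
    intro s
    by_cases hs : s ∈ A
    · obtain ⟨n, hn⟩ := mem_iUnion.mp hs
      exact ⟨n, Or.inl hn⟩
    · exact ⟨0, Or.inr hs⟩
  set z : ℝ≥0 → ℝ := fun s => zs (Nat.find (hpall s)) s with hz
  have hzmeas : Measurable z := by
    refine Measurable.find (fun n => hzm n) (fun n => ?_) hpall
    have hpn : {x : ℝ≥0 | p n x} = Iic (e n) ∪ Aᶜ := rfl
    rw [hpn]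
    exact measurableSet_Iic.union hAm.compl
  have hz_eq : ∀ (k : ℕ) (s : ℝ≥0), s ≤ e k → (∀ j, j < k → ¬ s ≤ e j) → z s = zs k s := by
    intro k s h1 h2
    have hfind : Nat.find (hpall s) = k := by
      rw [Nat.find_eq_iff]
      refine ⟨Or.inl h1, fun j hj => ?_⟩
      rintro (hje | hnA)
      · exact h2 j hj hje
      · exact hnA (mem_iUnion.mpr ⟨k, h1⟩)
    simp only [hz]
    rw [hfind]
  have main : ∀ (t : ℝ≥0) (k : ℕ),
      IntegrableOn (fun x : ℝ≥0∞ => z x.toNNReal)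
        (Ioc 0 ((min (e k) t : ℝ≥0) : ℝ≥0∞)) ν ∧
      ((t : ℝ≥0∞) < tG μ γ →
        ∫ x in Ioc (0 : ℝ≥0∞) ((min (e k) t : ℝ≥0) : ℝ≥0∞), z x.toNNReal ∂ν
          = F (min (e k) t) - F 0) := by
    intro t k
    induction k with
    | zero =>
      have hcongr : ∀ x ∈ Ioc (0 : ℝ≥0∞) ((min (e 0) t : ℝ≥0) : ℝ≥0∞),
          z x.toNNReal = zs 0 x.toNNReal := by
        intro x hx
        have hxt : x ≠ ∞ := ne_top_of_le_ne_top ENNReal.coe_ne_top hx.2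
        have hxe : x.toNNReal ≤ e 0 := by
          have h5 : x ≤ ((e 0 : ℝ≥0) : ℝ≥0∞) :=
            hx.2.trans (ENNReal.coe_le_coe.mpr (min_le_left _ _))
          rw [← ENNReal.coe_toNNReal hxt, ENNReal.coe_le_coe] at h5
          exact h5
        exact hz_eq 0 _ hxe (fun j hj => absurd hj (Nat.not_lt_zero j))
      have hsub0 : Ioc (0 : ℝ≥0∞) ((min (e 0) t : ℝ≥0) : ℝ≥0∞)
          ⊆ Icc 0 ((e 0 : ℝ≥0) : ℝ≥0∞) :=
        fun x hx => ⟨zero_le, hx.2.trans (ENNReal.coe_le_coe.mpr (min_le_left _ _))⟩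
      have hint0 : IntegrableOn (fun x : ℝ≥0∞ => z x.toNNReal)
          (Ioc 0 ((min (e 0) t : ℝ≥0) : ℝ≥0∞)) ν := by
        refine IntegrableOn.congr_fun ((hzint 0).mono_set hsub0)
          (fun x hx => (hcongr x hx).symm) measurableSet_Ioc
      refine ⟨hint0, fun htG' => ?_⟩
      rw [setIntegral_congr_fun measurableSet_Ioc (fun x hx => hcongr x hx)]
      exact hzrep 0 (min (e 0) t) (min_le_left _ _)
        (lt_of_le_of_lt (ENNReal.coe_le_coe.mpr (min_le_right _ _)) htG')
    | succ k ih =>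
      obtain ⟨ih1, ih2⟩ := ih
      by_cases hkt : t ≤ e k
      · have h1 : min (e (k+1)) t = t := min_eq_right (hkt.trans (hEmono (Nat.le_succ k)))
        have h2 : min (e k) t = t := min_eq_right hkt
        rw [h2] at ih1 ih2
        rw [h1]
        exact ⟨ih1, ih2⟩
      · push_neg at hkt
        have hmk : min (e k) t = e k := min_eq_left hkt.le
        rw [hmk] at ih1 ih2
        have hle : e k ≤ min (e (k+1)) t := le_min (hEmono (Nat.le_succ k)) hkt.le
        set a : ℝ≥0 := min (e (k+1)) t with ha
        have hsplit : Ioc (0 : ℝ≥0∞) (a : ℝ≥0∞)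
            = Ioc 0 ((e k : ℝ≥0) : ℝ≥0∞) ∪ Ioc ((e k : ℝ≥0) : ℝ≥0∞) (a : ℝ≥0∞) :=
          (Ioc_union_Ioc_eq_Ioc (zero_le) (ENNReal.coe_le_coe.mpr hle)).symm
        have hcongrP : ∀ x ∈ Ioc ((e k : ℝ≥0) : ℝ≥0∞) (a : ℝ≥0∞),
            z x.toNNReal = zs (k+1) x.toNNReal := by
          intro x hx
          have hxt : x ≠ ∞ := ne_top_of_le_ne_top ENNReal.coe_ne_top hx.2
          have hxa : x.toNNReal ≤ a := by
            have h5 := hx.2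
            rw [← ENNReal.coe_toNNReal hxt, ENNReal.coe_le_coe] at h5
            exact h5
          have hxk : e k < x.toNNReal := by
            have h5 := hx.1
            rw [← ENNReal.coe_toNNReal hxt, ENNReal.coe_lt_coe] at h5
            exact h5
          refine hz_eq (k+1) _ (hxa.trans (min_le_left _ _)) ?_
          intro j hj hle'
          exact absurd (hle'.trans (hEmono (Nat.lt_succ_iff.mp hj))) (not_le.mpr hxk)
        have hintP : IntegrableOn (fun x : ℝ≥0∞ => zs (k+1) x.toNNReal)
            (Ioc 0 (a : ℝ≥0∞)) ν :=
          (hzint (k+1)).mono_set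
            (fun x hx => ⟨zero_le, hx.2.trans (ENNReal.coe_le_coe.mpr (min_le_left _ _))⟩)
        have hintP2 : IntegrableOn (fun x : ℝ≥0∞ => z x.toNNReal)
            (Ioc ((e k : ℝ≥0) : ℝ≥0∞) (a : ℝ≥0∞)) ν :=
          IntegrableOn.congr_fun (hintP.mono_set (Ioc_subset_Ioc_left (zero_le)))
            (fun x hx => (hcongrP x hx).symm) measurableSet_Ioc
        have hdisj : Disjoint (Ioc (0 : ℝ≥0∞) ((e k : ℝ≥0) : ℝ≥0∞))
            (Ioc ((e k : ℝ≥0) : ℝ≥0∞) (a : ℝ≥0∞)) := Ioc_disjoint_Ioc_of_le le_rfl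
        have hint1 : IntegrableOn (fun x : ℝ≥0∞ => z x.toNNReal) (Ioc 0 (a : ℝ≥0∞)) ν := by
          rw [hsplit]
          exact ih1.union hintP2
        refine ⟨hint1, fun htG' => ?_⟩
        have htGa : ((a : ℝ≥0) : ℝ≥0∞) < tG μ γ :=
          lt_of_le_of_lt (ENNReal.coe_le_coe.mpr (min_le_right _ _)) htG'
        have htGek : ((e k : ℝ≥0) : ℝ≥0∞) < tG μ γ :=
          lt_of_le_of_lt (ENNReal.coe_le_coe.mpr hle) htGa
        have hu := hzrep (k+1) a (min_le_left _ _) htGa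
        have hv := hzrep (k+1) (e k) (hEmono (Nat.le_succ k)) htGek
        have hun : ∫ x in Ioc (0 : ℝ≥0∞) (a : ℝ≥0∞), zs (k+1) x.toNNReal ∂ν
            = (∫ x in Ioc (0 : ℝ≥0∞) ((e k : ℝ≥0) : ℝ≥0∞), zs (k+1) x.toNNReal ∂ν)
              + ∫ x in Ioc ((e k : ℝ≥0) : ℝ≥0∞) (a : ℝ≥0∞), zs (k+1) x.toNNReal ∂ν := by
          rw [hsplit]
          exact setIntegral_union hdisj measurableSet_Ioc
            (hintP.mono_set (by rw [hsplit]; exact subset_union_left))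
            (hintP.mono_set (by rw [hsplit]; exact subset_union_right))
        have hpiece : ∫ x in Ioc ((e k : ℝ≥0) : ℝ≥0∞) (a : ℝ≥0∞), z x.toNNReal ∂ν
            = F a - F (e k) := by
          rw [setIntegral_congr_fun measurableSet_Ioc (fun x hx => hcongrP x hx)]
          rw [hu, hv] at hun
          linarith
        calc ∫ x in Ioc (0 : ℝ≥0∞) (a : ℝ≥0∞), z x.toNNReal ∂ν
            = (∫ x in Ioc (0 : ℝ≥0∞) ((e k : ℝ≥0) : ℝ≥0∞), z x.toNNReal ∂ν)
              + ∫ x in Ioc ((e k : ℝ≥0) : ℝ≥0∞) (a : ℝ≥0∞), z x.toNNReal ∂ν := by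
              rw [hsplit]
              exact setIntegral_union hdisj measurableSet_Ioc ih1 hintP2
          _ = (F (e k) - F 0) + (F a - F (e k)) := by rw [ih2 htG', hpiece]
          _ = F a - F 0 := by ring
  refine ⟨z, ⟨hzmeas, fun t ht => ?_⟩, fun t htG' => ?_⟩
  · obtain ⟨n, hn⟩ := hcov2 t ht
    have h1 := (main t n).1
    rw [min_eq_right hn] at h1
    have h0 : IntegrableOn (fun x : ℝ≥0∞ => z x.toNNReal) {0} ν := by
      rw [integrableOn_singleton_iff]
      exact Or.inr (measure_lt_top _ _)
    rw [Icc_zero_split]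
    exact h0.union h1
  · obtain ⟨n, hn⟩ := hcov1 t htG'
    have h2 := (main t n).2 htG'
    rw [min_eq_right hn] at h2
    rw [h2]
    ring

end Glue

section Final
set_option linter.unusedSectionVars false
set_option maxHeartbeats 1000000

variable (μ : Measure Ω) [IsProbabilityMeasure μ] (γ : Ω → ℝ≥0∞)

lemma TT_lt_tG_caseA (hγ : Measurable γ) (hA : CaseA μ γ) {t : ℝ≥0} (ht : t ∈ TT μ γ) :
    (t : ℝ≥0∞) < tG μ γ := by
  by_contra hge
  push_neg at hge
  rw [mem_TT_iff μ γ hγ] at ht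
  have htop : tG μ γ ≠ ∞ := by
    intro h
    rw [h] at hge
    exact absurd (hge.trans_lt ENNReal.coe_lt_top) (lt_irrefl _)
  have h1 : (μ.map γ) (Ici (t : ℝ≥0∞)) ≤ (μ.map γ) (Ici (tG μ γ)) :=
    measure_mono (Ici_subset_Ici.mpr hge)
  rw [measure_Ici_tG μ γ hγ, caseA_atom μ γ hγ hA htop] at h1
  exact absurd ht (not_lt.mpr h1)

end Final
/-- **Proposition 3 (a).** Given `H ∈ L¹_loc(dG)`, any `F` defined by
`F(t) = Ḡ(t)⁻¹ (F(0)Ḡ(0) − ∫_(0,t] H dG)` for `0 < t < t_G` — with `F(0)` arbitrary in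
Case A and `F(0) = Ḡ(0)⁻¹ ∫_(0,t_G] H dG` in Case B — makes `(F,H)` satisfy Condition M;
and conversely any `F` such that `(F,H)` satisfies Condition M is of this form. -/
theorem stmt_7 (μ : Measure Ω) [IsProbabilityMeasure μ] (γ : Ω → ℝ≥0∞)
    (hγ : Measurable γ) (hpos : 0 < μ {ω | 0 < γ ω})
    (H : ℝ≥0 → ℝ) (hH : MemL1loc μ γ H) :
    (∀ F : ℝ≥0 → ℝ,
      (∀ t : ℝ≥0, 0 < t → (t : ℝ≥0∞) < tG μ γ →
        F t = (Gbar μ γ t)⁻¹ *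
          (F 0 * Gbar μ γ 0 - ∫ x in Ioc (0 : ℝ≥0∞) (t : ℝ≥0∞), H x.toNNReal ∂(μ.map γ))) →
      (CaseB μ γ →
        F 0 = (Gbar μ γ 0)⁻¹ *
          ∫ x in Ioc (0 : ℝ≥0∞) (tG μ γ), H x.toNNReal ∂(μ.map γ)) →
      CondM μ γ F H) ∧
    (∀ F : ℝ≥0 → ℝ, CondM μ γ F H →
      (∀ t : ℝ≥0, 0 < t → (t : ℝ≥0∞) < tG μ γ →
        F t = (Gbar μ γ t)⁻¹ *
          (F 0 * Gbar μ γ 0 - ∫ x in Ioc (0 : ℝ≥0∞) (t : ℝ≥0∞), H x.toNNReal ∂(μ.map γ))) ∧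
      (CaseB μ γ →
        F 0 = (Gbar μ γ 0)⁻¹ *
          ∫ x in Ioc (0 : ℝ≥0∞) (tG μ γ), H x.toNNReal ∂(μ.map γ))) := by
  haveI : IsProbabilityMeasure (μ.map γ) := Measure.isProbabilityMeasure_map hγ.aemeasurable
  have htG : 0 < tG μ γ := tG_pos μ γ hγ hpos
  have htG0 : ((0 : ℝ≥0) : ℝ≥0∞) < tG μ γ := by simpa using htG
  have hG0 : Gbar μ γ 0 ≠ 0 := ne_of_gt ((gbar_pos_iff μ γ hγ 0).mpr htG0)
  have hHmeas : Measurable fun x : ℝ≥0∞ => H x.toNNReal :=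
    hH.1.comp ENNReal.measurable_toNNReal
  constructor
  · -- forward direction
    intro F hFform hFB
    refine ⟨?_, hH, ?_, ?_⟩
    · -- existence of the density z
      rcases eq_zero_or_pos (μ {ω | γ ω = tG μ γ ∧ tG μ γ < ⊤}) with hA | hB
      · -- Case A
        rcases eq_or_ne (tG μ γ) ∞ with htop | htop
        · -- tG = ∞
          refine glue_exists μ γ hγ F (fun n => (n : ℝ≥0))
            (fun i j h => by show ((i : ℝ≥0) ≤ (j : ℝ≥0)); exact_mod_cast h) ?_ ?_ ?_
          · intro t _
            obtain ⟨n, hn⟩ := exists_nat_ge t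
            exact ⟨n, hn⟩
          · intro t _
            obtain ⟨n, hn⟩ := exists_nat_ge t
            exact ⟨n, hn⟩
          · intro n
            have hlt : (((n : ℝ≥0) : ℝ≥0)  : ℝ≥0∞) < tG μ γ := by
              rw [htop]
              exact ENNReal.coe_lt_top
            exact piece_exists μ γ hγ htG H hH.1 (n : ℝ≥0) (Gbar μ γ (n : ℝ≥0))
              ((gbar_pos_iff μ γ hγ _).mpr hlt)
              (fun t hte _ => gbar_antitone μ γ hte)
              (hH.2 _ (mem_TT_of_lt_tG μ γ hγ hlt)) F hFform
        · -- tG < ∞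
          set d : ℝ≥0 := (tG μ γ).toNNReal with hd
          have hdcoe : (d : ℝ≥0∞) = tG μ γ := ENNReal.coe_toNNReal htop
          have hd0 : 0 < d := ENNReal.toNNReal_pos (ne_of_gt htG) htop
          set en : ℕ → ℝ≥0 := fun n => d - d / ((n : ℝ≥0) + 2) with hen
          have hinvanti : ∀ i j : ℕ, i ≤ j → d / ((j : ℝ≥0) + 2) ≤ d / ((i : ℝ≥0) + 2) := by
            intro i j hij
            apply div_le_div_of_nonneg_left (zero_le) (by positivity)
            exact add_le_add_left (by exact_mod_cast hij) 2
          have hmono : Monotone en := fun i j hij => tsub_le_tsub_left (hinvanti i j hij) d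
          have hlt : ∀ n, ((en n : ℝ≥0) : ℝ≥0∞) < tG μ γ := by
            intro n
            rw [← hdcoe, ENNReal.coe_lt_coe, hen]
            exact tsub_lt_self hd0 (by positivity)
          have hcov : ∀ t : ℝ≥0, (t : ℝ≥0∞) < tG μ γ → ∃ n, t ≤ en n := by
            intro t ht
            have htd : t < d := by
              rw [← ENNReal.coe_lt_coe, hdcoe]
              exact ht
            have hεpos : 0 < d - t := tsub_pos_of_lt htd
            obtain ⟨n, hn⟩ := exists_nat_gt (d / (d - t))
            refine ⟨n, ?_⟩
            have hkey : d / ((n : ℝ≥0) + 2) ≤ d - t := by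
              rw [_root_.div_le_iff₀ (by positivity : (0 : ℝ≥0) < (n : ℝ≥0) + 2)]
              calc d = d / (d - t) * (d - t) := (div_mul_cancel₀ d hεpos.ne').symm
                _ ≤ ((n : ℝ≥0) + 2) * (d - t) :=
                    mul_le_mul_left (hn.trans_le (self_le_add_right _ 2)).le _
                _ = (d - t) * ((n : ℝ≥0) + 2) := mul_comm _ _
            have h2 : t + d / ((n : ℝ≥0) + 2) ≤ d :=
              le_trans (add_le_add_right hkey t) (by rw [add_tsub_cancel_of_le htd.le])
            exact le_tsub_of_add_le_right h2
          refine glue_exists μ γ hγ F en hmono hcov ?_ ?_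
          · intro t ht
            exact hcov t (TT_lt_tG_caseA μ γ hγ hA ht)
          · intro n
            exact piece_exists μ γ hγ htG H hH.1 (en n) (Gbar μ γ (en n))
              ((gbar_pos_iff μ γ hγ _).mpr (hlt n))
              (fun t hte _ => gbar_antitone μ γ hte)
              (hH.2 _ (mem_TT_of_lt_tG μ γ hγ (hlt n))) F hFform
      · -- Case B
        have hBB : CaseB μ γ := hB
        have htop := caseB_ne_top μ γ hBB
        have hatom := caseB_atom μ γ hγ hBB
        set d : ℝ≥0 := (tG μ γ).toNNReal with hd
        have hdcoe : (d : ℝ≥0∞) = tG μ γ := ENNReal.coe_toNNReal htop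
        have hdTT : d ∈ TT μ γ := by
          rw [mem_TT_iff μ γ hγ, hdcoe]
          exact lt_of_lt_of_le hatom (measure_mono (singleton_subset_iff.mpr self_mem_Ici))
        refine glue_exists μ γ hγ F (fun _ => d) monotone_const ?_ ?_ ?_
        · intro t ht
          refine ⟨0, ?_⟩
          rw [← ENNReal.coe_le_coe, hdcoe]
          exact ht.le
        · intro t ht
          refine ⟨0, ?_⟩
          rw [← ENNReal.coe_le_coe, hdcoe]
          by_contra hgt
          push_neg at hgt
          rw [mem_TT_iff μ γ hγ] at ht
          have h1 : (μ.map γ) (Ici (t : ℝ≥0∞)) ≤ (μ.map γ) (Ioi (tG μ γ)) :=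
            measure_mono (fun x hx => lt_of_lt_of_le hgt hx)
          rw [measure_Ioi_tG μ γ hγ] at h1
          exact absurd ht (not_lt.mpr h1)
        · intro n
          refine piece_exists μ γ hγ htG H hH.1 d (((μ.map γ) {tG μ γ}).toReal)
            (ENNReal.toReal_pos (ne_of_gt hatom) (measure_ne_top _ _)) ?_
            (hH.2 d hdTT) F hFform
          · intro t hte htlt
            rw [gbar_eq μ γ hγ]
            exact ENNReal.toReal_mono (measure_ne_top _ _)
              (measure_mono (singleton_subset_iff.mpr htlt))
    · -- the balance equation
      intro t htlt
      rcases eq_or_ne t 0 with rfl | ht0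
      · have hempty : Ioc (0 : ℝ≥0∞) ((0 : ℝ≥0) : ℝ≥0∞) = ∅ := by simp
        rw [hempty, Measure.restrict_empty, integral_zero_measure, add_zero]
      · have hGt : Gbar μ γ t ≠ 0 := ne_of_gt ((gbar_pos_iff μ γ hγ t).mpr htlt)
        rw [hFform t (pos_iff_ne_zero.mpr ht0) htlt]
        field_simp
        ring
    · -- the limit in Case B
      intro hBB
      have htop := caseB_ne_top μ γ hBB
      have hatom := caseB_atom μ γ hγ hBB
      haveI := leftF_neBot (a := tG μ γ) htG
      set dd : ℝ≥0 := (tG μ γ).toNNReal with hdd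
      have hdcoe : (dd : ℝ≥0∞) = tG μ γ := ENNReal.coe_toNNReal htop
      have hdTT : dd ∈ TT μ γ := by
        rw [mem_TT_iff μ γ hγ, hdcoe]
        exact lt_of_lt_of_le hatom (measure_mono (singleton_subset_iff.mpr self_mem_Ici))
      have hHint : IntegrableOn (fun x : ℝ≥0∞ => H x.toNNReal) (Icc 0 (tG μ γ)) (μ.map γ) := by
        have h1 := hH.2 dd hdTT
        rwa [hdcoe] at h1
      have hIci := measure_Ici_tG μ γ hγ
      set P : ℝ := ((μ.map γ) {tG μ γ}).toReal with hP
      have hP0 : P ≠ 0 := ne_of_gt (ENNReal.toReal_pos (ne_of_gt hatom) (measure_ne_top _ _))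
      have L1 := tendsto_gbar_leftF μ γ hγ (tG μ γ)
      rw [hIci] at L1
      have L2 := tendsto_setIntegral_leftF μ γ hγ (a := tG μ γ) (fun x => H x.toNNReal)
        hHmeas hHint
      have hc : F 0 * Gbar μ γ 0
          = ∫ x in Ioc (0 : ℝ≥0∞) (tG μ γ), H x.toNNReal ∂(μ.map γ) := by
        rw [hFB hBB]
        field_simp
      have hsplit := integral_Ioc_eq_Ioo_add μ γ hγ htG (fun x => H x.toNNReal) hHmeas hHint
      have heq : ∀ᶠ t : ℝ≥0 in leftF (tG μ γ), F t = (Gbar μ γ t)⁻¹ *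
          (F 0 * Gbar μ γ 0
            - ∫ x in Ioc (0 : ℝ≥0∞) (t : ℝ≥0∞), H x.toNNReal ∂(μ.map γ)) := by
        obtain ⟨l, hl0, hltG⟩ := exists_between htG
        filter_upwards [leftF_eventually_lt (tG μ γ), leftF_eventually_gt hltG] with t h1 h2
        refine hFform t ?_ h1
        exact_mod_cast (lt_trans hl0 h2)
      have hlim : Tendsto F (leftF (tG μ γ)) (𝓝 (P⁻¹ * ((F 0 * Gbar μ γ 0)
          - ∫ x in Ioo (0 : ℝ≥0∞) (tG μ γ), H x.toNNReal ∂(μ.map γ)))) := by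
        refine Tendsto.congr' (heq.mono fun t ht => ht.symm) ?_
        exact (L1.inv₀ hP0).mul (tendsto_const_nhds.sub L2)
      have hval : P⁻¹ * ((F 0 * Gbar μ γ 0)
          - ∫ x in Ioo (0 : ℝ≥0∞) (tG μ γ), H x.toNNReal ∂(μ.map γ))
            = H (tG μ γ).toNNReal := by
        rw [hc, hsplit]
        have hPmap : P = (μ (γ ⁻¹' {tG μ γ})).toReal := by
          rw [hP, Measure.map_apply hγ (measurableSet_singleton _)]
        field_simp
        rw [← hP]
        ring
      rw [← hval]
      exact hlim
  · -- converse direction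
    intro F hM
    obtain ⟨hzex, hH', h3, h4⟩ := hM
    constructor
    · intro t ht0 htlt
      have hGt : Gbar μ γ t ≠ 0 := ne_of_gt ((gbar_pos_iff μ γ hγ t).mpr htlt)
      have hb := h3 t htlt
      field_simp
      linarith
    · intro hBB
      have htop := caseB_ne_top μ γ hBB
      have hatom := caseB_atom μ γ hγ hBB
      haveI := leftF_neBot (a := tG μ γ) htG
      set dd : ℝ≥0 := (tG μ γ).toNNReal with hdd
      have hdcoe : (dd : ℝ≥0∞) = tG μ γ := ENNReal.coe_toNNReal htop
      have hdTT : dd ∈ TT μ γ := by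
        rw [mem_TT_iff μ γ hγ, hdcoe]
        exact lt_of_lt_of_le hatom (measure_mono (singleton_subset_iff.mpr self_mem_Ici))
      have hHint : IntegrableOn (fun x : ℝ≥0∞ => H x.toNNReal) (Icc 0 (tG μ γ)) (μ.map γ) := by
        have h1 := hH.2 dd hdTT
        rwa [hdcoe] at h1
      have hIci := measure_Ici_tG μ γ hγ
      set P : ℝ := ((μ.map γ) {tG μ γ}).toReal with hP
      have hP0 : P ≠ 0 := ne_of_gt (ENNReal.toReal_pos (ne_of_gt hatom) (measure_ne_top _ _))
      have L1 := tendsto_gbar_leftF μ γ hγ (tG μ γ)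
      rw [hIci] at L1
      have L2 := tendsto_setIntegral_leftF μ γ hγ (a := tG μ γ) (fun x => H x.toNNReal)
        hHmeas hHint
      have hsplit := integral_Ioc_eq_Ioo_add μ γ hγ htG (fun x => H x.toNNReal) hHmeas hHint
      have hFG : Tendsto (fun t : ℝ≥0 => F t * Gbar μ γ t) (leftF (tG μ γ))
          (𝓝 (H (tG μ γ).toNNReal * P)) := (h4 hBB).mul L1
      have hev : (fun t : ℝ≥0 => F t * Gbar μ γ t) =ᶠ[leftF (tG μ γ)]
          (fun t : ℝ≥0 => F 0 * Gbar μ γ 0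
            - ∫ x in Ioc (0 : ℝ≥0∞) (t : ℝ≥0∞), H x.toNNReal ∂(μ.map γ)) := by
        filter_upwards [leftF_eventually_lt (tG μ γ)] with t h1
        have hb := h3 t h1
        linarith
      have hFG2 : Tendsto (fun t : ℝ≥0 => F 0 * Gbar μ γ 0
          - ∫ x in Ioc (0 : ℝ≥0∞) (t : ℝ≥0∞), H x.toNNReal ∂(μ.map γ)) (leftF (tG μ γ))
          (𝓝 (F 0 * Gbar μ γ 0
            - ∫ x in Ioo (0 : ℝ≥0∞) (tG μ γ), H x.toNNReal ∂(μ.map γ))) :=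
        tendsto_const_nhds.sub L2
      have huniq : H (tG μ γ).toNNReal * P = F 0 * Gbar μ γ 0
          - ∫ x in Ioo (0 : ℝ≥0∞) (tG μ γ), H x.toNNReal ∂(μ.map γ) :=
        tendsto_nhds_unique (hFG.congr' hev) hFG2
      have hc : F 0 * Gbar μ γ 0
          = ∫ x in Ioc (0 : ℝ≥0∞) (tG μ γ), H x.toNNReal ∂(μ.map γ) := by
        rw [hsplit]
        linarith
      rw [← hc]
      field_simp

end WithMeasurableSpace

end SingleJump
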